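/- arXiv:cond-mat/0403240 — 5 statements merged into one kernel-verified Lean document; each statement's English description precedes it below -/
import Mathlib

section
/- Let d ≥ 1 be an integer and λ ≥ 0. On the Hilbert space (ℂ²)^{⊗(2d+1)}, with tensor factors labeled by a distinguished index 0 and indices 1,…,2d, the lowest eigenvalue of the Hermitian operator − (1/2) S¹_0 Σ_{i=1}^{2d} S¹_i − (1/2) S²_0 Σ_{i=1}^{2d} S²_i + λ S³_0 equals −(1/4)·[d(d+1) + 4λ²]^{1/2}. -/
open scoped BigOperators
open Matrix

noncomputable section

/-- Spin configurations of `m` two-level systems: the Hilbert space `(ℂ²)^{⊗m}`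
is realized as matrices indexed by `Fin m → Bool` (`true` = spin up). -/
abbrev Cfg' (m : ℕ) := Fin m → Bool

/-- Entries of the Pauli matrix σ¹. -/
def pauli1 (a b : Bool) : ℂ := if a = b then 0 else 1

/-- Entries of the Pauli matrix σ². -/
def pauli2 (a b : Bool) : ℂ := if a = b then 0 else if b then Complex.I else -Complex.I

/-- Entries of the Pauli matrix σ³. -/
def pauli3 (a b : Bool) : ℂ := if a = b then (if a then 1 else -1) else 0

/-- The spin-1/2 operator `(1/2)·σ` acting on the `j`-th tensor factor of `(ℂ²)^{⊗m}`
(identity on the other factors). -/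
def spinAt (m : ℕ) (p : Bool → Bool → ℂ) (j : Fin m) : Matrix (Cfg' m) (Cfg' m) ℂ :=
  fun σ τ => if Function.update σ j (τ j) = τ then (1/2 : ℂ) * p (σ j) (τ j) else 0

/-- The one-site-plus-neighbors operator
`−(1/2) S¹₀ Σ_{i=1}^{2d} S¹ᵢ − (1/2) S²₀ Σ_{i=1}^{2d} S²ᵢ + λ S³₀`
on `(ℂ²)^{⊗(2d+1)}`, the distinguished factor being the index `0`. -/
def starOp (d : ℕ) (lam : ℝ) : Matrix (Cfg' (2 * d + 1)) (Cfg' (2 * d + 1)) ℂ :=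
  -((1/2 : ℂ) • (spinAt (2 * d + 1) pauli1 0 * ∑ i : Fin (2 * d), spinAt (2 * d + 1) pauli1 i.succ))
  - (1/2 : ℂ) • (spinAt (2 * d + 1) pauli2 0 * ∑ i : Fin (2 * d), spinAt (2 * d + 1) pauli2 i.succ)
  + (lam : ℂ) • spinAt (2 * d + 1) pauli3 0


namespace StarAux

variable {d : ℕ}

/-- Flip the spin at site `0` and at bath site `i`. -/
def flip2 (d : ℕ) (σ : Cfg' (2*d+1)) (i : Fin (2*d)) : Cfg' (2*d+1) :=
  Function.update (Function.update σ i.succ (!(σ i.succ))) 0 (!(σ 0))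

lemma flip2_apply_zero (σ : Cfg' (2*d+1)) (i : Fin (2*d)) :
    flip2 d σ i 0 = !(σ 0) := by
  simp [flip2]

lemma flip2_apply_succ (σ : Cfg' (2*d+1)) (i : Fin (2*d)) :
    flip2 d σ i i.succ = !(σ i.succ) := by
  simp [flip2, Function.update_of_ne (Fin.succ_ne_zero i)]

lemma flip2_apply_other (σ : Cfg' (2*d+1)) (i : Fin (2*d)) (j : Fin (2*d+1))
    (h0 : j ≠ 0) (hi : j ≠ i.succ) : flip2 d σ i j = σ j := by
  simp [flip2, Function.update_of_ne h0, Function.update_of_ne hi]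

lemma prod_entry (p q : Bool → Bool → ℂ) (i : Fin (2*d)) (σ τ : Cfg' (2*d+1)) :
    (spinAt (2*d+1) p 0 * spinAt (2*d+1) q i.succ) σ τ =
      if ∀ j, j ≠ 0 → j ≠ i.succ → σ j = τ j then
        (1/4 : ℂ) * p (σ 0) (τ 0) * q (σ i.succ) (τ i.succ) else 0 := by
  rw [Matrix.mul_apply]
  rw [Finset.sum_eq_single (Function.update σ 0 (τ 0))]
  · have h1 : spinAt (2*d+1) p 0 σ (Function.update σ 0 (τ 0)) = (1/2 : ℂ) * p (σ 0) (τ 0) := by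
      simp [spinAt]
    rw [h1]
    have hupd : Function.update σ 0 (τ 0) i.succ = σ i.succ :=
      Function.update_of_ne (Fin.succ_ne_zero i) _ _
    have hiff : (Function.update (Function.update σ 0 (τ 0)) i.succ (τ i.succ) = τ) ↔
        (∀ j, j ≠ 0 → j ≠ i.succ → σ j = τ j) := by
      constructor
      · intro h j hj0 hji
        have := congrFun h j
        rwa [Function.update_of_ne hji, Function.update_of_ne hj0] at this
      · intro h
        funext j
        rcases eq_or_ne j i.succ with rfl | hji
        · rw [Function.update_self]
        · rw [Function.update_of_ne hji]
          rcases eq_or_ne j 0 with rfl | hj0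
          · rw [Function.update_self]
          · rw [Function.update_of_ne hj0]; exact h j hj0 hji
    by_cases hc : ∀ j, j ≠ 0 → j ≠ i.succ → σ j = τ j
    · rw [if_pos hc]
      have : spinAt (2*d+1) q i.succ (Function.update σ 0 (τ 0)) τ
          = (1/2 : ℂ) * q (σ i.succ) (τ i.succ) := by
        rw [spinAt, if_pos (hiff.mpr hc), hupd]
      rw [this]; ring
    · rw [if_neg hc]
      have : spinAt (2*d+1) q i.succ (Function.update σ 0 (τ 0)) τ = 0 := by
        rw [spinAt, if_neg (by rw [hiff]; exact hc)]
      rw [this, mul_zero]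
  · intro ρ _ hρ
    by_cases h1 : Function.update σ 0 (ρ 0) = ρ
    · have hρ0 : ρ 0 ≠ τ 0 := by
        intro h; apply hρ; rw [← h1, h]
      have : spinAt (2*d+1) q i.succ ρ τ = 0 := by
        rw [spinAt, if_neg]
        intro h
        apply hρ0
        have := congrFun h 0
        rwa [Function.update_of_ne (Fin.succ_ne_zero i).symm] at this
      rw [this, mul_zero]
    · have : spinAt (2*d+1) p 0 σ ρ = 0 := by rw [spinAt, if_neg h1]
      rw [this, zero_mul]
  · intro h; exact absurd (Finset.mem_univ _) h

lemma bool_case (a b c e : Bool) :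
    (1/2 : ℂ) * ((1/4 : ℂ) * pauli1 a b * pauli1 c e)
      + (1/2 : ℂ) * ((1/4 : ℂ) * pauli2 a b * pauli2 c e)
    = if (b = !a ∧ e = !c) ∧ ¬(c = a) then (1/4 : ℂ) else 0 := by
  cases a <;> cases b <;> cases c <;> cases e <;>
    simp [pauli1, pauli2, Complex.I_mul_I] <;> ring_nf <;>
    simp [Complex.I_sq] <;> ring

lemma couple_entry (i : Fin (2*d)) (σ τ : Cfg' (2*d+1)) :
    ((1/2 : ℂ) • (spinAt (2*d+1) pauli1 0 * spinAt (2*d+1) pauli1 i.succ)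
      + (1/2 : ℂ) • (spinAt (2*d+1) pauli2 0 * spinAt (2*d+1) pauli2 i.succ)) σ τ
    = if τ = flip2 d σ i ∧ ¬(σ i.succ = σ 0) then (1/4 : ℂ) else 0 := by
  have hs := Fin.succ_ne_zero i
  simp only [Matrix.add_apply, Matrix.smul_apply, prod_entry, smul_eq_mul]
  by_cases hag : ∀ j, j ≠ 0 → j ≠ i.succ → σ j = τ j
  · rw [if_pos hag, if_pos hag]
    have hflip : (τ = flip2 d σ i) ↔ (τ 0 = !σ 0 ∧ τ i.succ = !σ i.succ) := by
      constructor
      · intro h; subst h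
        exact ⟨flip2_apply_zero σ i, flip2_apply_succ σ i⟩
      · rintro ⟨h0, hi⟩
        funext j
        rcases eq_or_ne j 0 with rfl | hj0
        · rw [h0, flip2_apply_zero]
        rcases eq_or_ne j i.succ with rfl | hji
        · rw [hi, flip2_apply_succ]
        · rw [flip2_apply_other σ i j hj0 hji, hag j hj0 hji]
    rw [bool_case (σ 0) (τ 0) (σ i.succ) (τ i.succ)]
    simp only [hflip]
  · rw [if_neg hag, if_neg hag, if_neg]
    · ring
    · rintro ⟨h, -⟩
      apply hag
      intro j hj0 hji
      rw [h, flip2_apply_other σ i j hj0 hji]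

lemma pauli3_entry (σ τ : Cfg' (2*d+1)) :
    spinAt (2*d+1) pauli3 0 σ τ
      = if τ = σ then (if σ 0 then (1/2 : ℂ) else -(1/2)) else 0 := by
  rw [spinAt]
  rcases eq_or_ne τ σ with rfl | hτ
  · rw [if_pos (Function.update_eq_self 0 τ), if_pos rfl]
    cases h : τ 0 <;> simp [pauli3, h]
  · rw [if_neg hτ]
    by_cases h : Function.update σ 0 (τ 0) = τ
    · rw [if_pos h]
      have hne : ¬(σ 0 = τ 0) := by
        intro he
        apply hτ
        rw [← h, ← he, Function.update_eq_self]
      simp [pauli3, hne]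
    · rw [if_neg h]

lemma sum_mulVec {n : ℕ} {ι : Type*} (s : Finset ι)
    (f : ι → Matrix (Cfg' n) (Cfg' n) ℂ) (v : Cfg' n → ℂ) :
    (∑ i ∈ s, f i).mulVec v = ∑ i ∈ s, (f i).mulVec v := by
  ext x
  simp only [Matrix.mulVec, dotProduct, Finset.sum_apply, Matrix.sum_apply,
    Finset.sum_mul]
  rw [Finset.sum_comm]

lemma couple_mulVec (i : Fin (2*d)) (ψ : Cfg' (2*d+1) → ℂ) (σ : Cfg' (2*d+1)) :
    (((1/2 : ℂ) • (spinAt (2*d+1) pauli1 0 * spinAt (2*d+1) pauli1 i.succ)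
      + (1/2 : ℂ) • (spinAt (2*d+1) pauli2 0 * spinAt (2*d+1) pauli2 i.succ)).mulVec ψ) σ
    = if ¬(σ i.succ = σ 0) then (1/4 : ℂ) * ψ (flip2 d σ i) else 0 := by
  simp only [Matrix.mulVec, dotProduct, couple_entry, ite_mul, zero_mul]
  by_cases hc : σ i.succ = σ 0
  · simp [hc]
  · simp only [hc, not_false_iff, and_true, if_true]
    rw [Finset.sum_ite_eq' Finset.univ (flip2 d σ i) (fun τ => (1/4 : ℂ) * ψ τ)]
    simp

lemma pauli3_mulVec (ψ : Cfg' (2*d+1) → ℂ) (σ : Cfg' (2*d+1)) :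
    ((spinAt (2*d+1) pauli3 0).mulVec ψ) σ
      = (if σ 0 then (1/2 : ℂ) else -(1/2)) * ψ σ := by
  simp only [Matrix.mulVec, dotProduct, pauli3_entry, ite_mul, zero_mul, mul_ite]
  rw [Finset.sum_ite_eq' Finset.univ σ
    (fun τ => if σ 0 = true then (1/2 : ℂ) * ψ τ else -(1/2) * ψ τ)]
  simp only [Finset.mem_univ, if_true]

lemma starOp_eq (d : ℕ) (lam : ℝ) :
    starOp d lam =
      -(∑ i : Fin (2*d), ((1/2 : ℂ) • (spinAt (2*d+1) pauli1 0 * spinAt (2*d+1) pauli1 i.succ)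
        + (1/2 : ℂ) • (spinAt (2*d+1) pauli2 0 * spinAt (2*d+1) pauli2 i.succ)))
      + (lam : ℂ) • spinAt (2*d+1) pauli3 0 := by
  rw [starOp, Matrix.mul_sum, Matrix.mul_sum, Finset.smul_sum, Finset.smul_sum,
    Finset.sum_add_distrib]
  abel

lemma starOp_mulVec_apply (d : ℕ) (lam : ℝ) (ψ : Cfg' (2*d+1) → ℂ) (σ : Cfg' (2*d+1)) :
    (starOp d lam).mulVec ψ σ =
      (lam : ℂ) * ((if σ 0 then (1/2 : ℂ) else -(1/2)) * ψ σ)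
      - ∑ i : Fin (2*d), (if ¬(σ i.succ = σ 0) then (1/4 : ℂ) * ψ (flip2 d σ i) else 0) := by
  rw [starOp_eq, Matrix.add_mulVec, Matrix.neg_mulVec, Matrix.smul_mulVec, sum_mulVec]
  simp only [Pi.add_apply, Pi.neg_apply, Pi.smul_apply, Finset.sum_apply, smul_eq_mul,
    couple_mulVec, pauli3_mulVec]
  ring



variable {d : ℕ}

def nup (d : ℕ) (σ : Cfg' (2*d+1)) : ℕ :=
  (Finset.univ.filter (fun i : Fin (2*d) => σ i.succ = true)).card

def ndn (d : ℕ) (σ : Cfg' (2*d+1)) : ℕ :=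
  (Finset.univ.filter (fun i : Fin (2*d) => σ i.succ = false)).card

lemma nup_add_ndn (σ : Cfg' (2*d+1)) : nup d σ + ndn d σ = 2*d := by
  classical
  have h := Finset.card_filter_add_card_filter_not
    (s := (Finset.univ : Finset (Fin (2*d)))) (fun i => σ i.succ = true)
  rw [nup, ndn]
  simpa [Bool.not_eq_true] using h

lemma flip2_flip2 (σ : Cfg' (2*d+1)) (i : Fin (2*d)) : flip2 d (flip2 d σ i) i = σ := by
  funext j
  rcases eq_or_ne j 0 with rfl | hj0
  · rw [flip2_apply_zero, flip2_apply_zero, Bool.not_not]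
  rcases eq_or_ne j i.succ with rfl | hji
  · rw [flip2_apply_succ, flip2_apply_succ, Bool.not_not]
  · rw [flip2_apply_other _ _ _ hj0 hji, flip2_apply_other _ _ _ hj0 hji]

lemma nup_flip2_of_false (σ : Cfg' (2*d+1)) (i : Fin (2*d)) (h : σ i.succ = false) :
    nup d (flip2 d σ i) = nup d σ + 1 := by
  classical
  rw [nup, nup]
  have hset : (Finset.univ.filter (fun i' : Fin (2*d) => flip2 d σ i i'.succ = true))
      = insert i (Finset.univ.filter (fun i' : Fin (2*d) => σ i'.succ = true)) := by
    ext i'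
    rcases eq_or_ne i' i with rfl | hii
    · simp [flip2_apply_succ, h]
    · have hs : i'.succ ≠ i.succ := by
        simpa [Fin.succ_inj] using hii
      simp [flip2_apply_other σ i i'.succ (Fin.succ_ne_zero i') hs, hii]
  rw [hset, Finset.card_insert_of_notMem (by simp [h])]

lemma nup_flip2_of_true (σ : Cfg' (2*d+1)) (i : Fin (2*d)) (h : σ i.succ = true) :
    nup d σ = nup d (flip2 d σ i) + 1 := by
  have h' : flip2 d σ i i.succ = false := by rw [flip2_apply_succ, h]; rfl
  have := nup_flip2_of_false (flip2 d σ i) i h'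
  rwa [flip2_flip2] at this

lemma ndn_eq (σ : Cfg' (2*d+1)) : ndn d σ = 2*d - nup d σ := by
  have := nup_add_ndn (d := d) σ; omega

/-- sum of an indicator-constant over the bath indices -/
lemma sum_ite_count_true (σ : Cfg' (2*d+1)) (c : ℂ) :
    (∑ i : Fin (2*d), if σ i.succ = true then c else 0) = (nup d σ : ℂ) * c := by
  rw [nup, Finset.sum_ite, Finset.sum_const, Finset.sum_const_zero, add_zero, nsmul_eq_mul]

lemma sum_ite_count_false (σ : Cfg' (2*d+1)) (c : ℂ) :
    (∑ i : Fin (2*d), if σ i.succ = false then c else 0) = (ndn d σ : ℂ) * c := by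
  rw [ndn, Finset.sum_ite, Finset.sum_const, Finset.sum_const_zero, add_zero, nsmul_eq_mul]



lemma card_lt_filter (d : ℕ) (hd : 1 ≤ d) :
    ((Finset.univ : Finset (Fin (2*d))).filter (fun i : Fin (2*d) => (i : ℕ) < d)).card = d := by
  have hset : (Finset.univ : Finset (Fin (2*d))).filter (fun i : Fin (2*d) => (i : ℕ) < d)
      = Finset.Iio (⟨d, by omega⟩ : Fin (2*d)) := by
    ext i
    simp [Fin.lt_def]
  rw [hset, Fin.card_Iio]

lemma mem_spec (d : ℕ) (hd : 1 ≤ d) (lam : ℝ) (hlam : 0 ≤ lam) :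
    ∃ ψ : Cfg' (2*d+1) → ℂ, ψ ≠ 0 ∧ (starOp d lam).mulVec ψ
      = (((-(1/4) * Real.sqrt ((d:ℝ)*((d:ℝ)+1) + 4*lam^2) : ℝ)) : ℂ) • ψ := by
  set D : ℝ := (d:ℝ)*((d:ℝ)+1) + 4*lam^2 with hD
  have hD0 : 0 ≤ D := by positivity
  set c : ℝ := (1/4) * Real.sqrt D with hc
  have hc2 : c^2 = D/16 := by
    rw [hc, mul_pow, Real.sq_sqrt hD0]; ring
  have hc0 : 0 ≤ c := by positivity
  set a : ℝ := (d:ℝ) with ha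
  set b : ℝ := 2*lam + 4*c with hb
  set ψR : Cfg' (2*d+1) → ℝ := fun σ =>
    if σ 0 = true then (if nup d σ = d then a else 0)
    else (if nup d σ = d + 1 then b else 0) with hψR
  refine ⟨fun σ => ((ψR σ : ℝ) : ℂ), ?_, ?_⟩
  · -- nonvanishing at σ* = fun j => decide ((j:ℕ) ≤ d)
    intro hzero
    set σs : Cfg' (2*d+1) := fun j => decide ((j:ℕ) ≤ d) with hσs
    have h0 : σs 0 = true := by simp [hσs]
    have hnup : nup d σs = d := by
      rw [nup]
      have : (Finset.univ.filter (fun i : Fin (2*d) => σs i.succ = true))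
          = (Finset.univ.filter (fun i : Fin (2*d) => (i : ℕ) < d)) := by
        apply Finset.filter_congr
        intro i _
        simp only [hσs, Fin.val_succ, decide_eq_true_eq]
        omega
      rw [this, card_lt_filter d hd]
    have := congrFun hzero σs
    rw [hψR] at this
    simp only [h0, hnup, if_true, Pi.zero_apply] at this
    have ha0 : a ≠ 0 := by
      rw [ha]; exact_mod_cast Nat.one_le_iff_ne_zero.mp hd
    exact ha0 (by exact_mod_cast this)
  · funext σ
    rw [starOp_mulVec_apply]
    simp only [Pi.smul_apply, smul_eq_mul]
    rcases hσ0 : σ 0 with _ | _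
    · -- σ 0 = false
      have hsum : (∑ i : Fin (2*d),
          if ¬(σ i.succ = false) then (1/4 : ℂ) * ((ψR (flip2 d σ i) : ℝ) : ℂ) else 0)
          = ((nup d σ : ℂ)) * ((1/4) * (if nup d σ = d + 1 then ((a:ℝ):ℂ) else 0)) := by
        rw [← sum_ite_count_true σ ((1/4 : ℂ) * (if nup d σ = d + 1 then ((a:ℝ):ℂ) else 0))]
        apply Finset.sum_congr rfl
        intro i _
        rcases hi : σ i.succ with _ | _
        · simp [hσ0, hi]
        · have hnf : nup d σ = nup d (flip2 d σ i) + 1 := nup_flip2_of_true σ i hi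
          have hf0 : flip2 d σ i 0 = true := by rw [flip2_apply_zero, hσ0]; rfl
          have hval : ψR (flip2 d σ i) = if nup d σ = d + 1 then a else 0 := by
            rw [hψR]
            simp only [hf0, if_true]
            congr 1
            simp only [eq_iff_iff]
            omega
          have hval2 : ((ψR (flip2 d σ i) : ℝ) : ℂ)
              = if nup d σ = d + 1 then ((a:ℝ):ℂ) else 0 := by
            rw [hval]; split <;> simp
          simp [hσ0, hi, hval2, mul_ite, mul_zero]
      rw [hsum]
      have hψσ : ψR σ = if nup d σ = d + 1 then b else 0 := by
        rw [hψR]; simp [hσ0]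
      rw [hψσ]
      by_cases hn : nup d σ = d + 1
      · simp only [hn, if_true, if_pos rfl]
        push_cast [hn]
        have : lam * (-(1/2) * b) - ((d:ℝ)+1) * ((1/4) * a) = (-(1/4) * Real.sqrt D) * b := by
          rw [hb, ha]
          have hcc : -(1/4) * Real.sqrt D = -c := by rw [hc]; ring
          rw [hcc]
          nlinarith [hc2]
        have h2 := congrArg (fun x : ℝ => (x : ℂ)) this
        push_cast at h2 ⊢
        exact_mod_cast h2
      · simp [hn]
    · -- σ 0 = true
      have hsum : (∑ i : Fin (2*d),
          if ¬(σ i.succ = true) then (1/4 : ℂ) * ((ψR (flip2 d σ i) : ℝ) : ℂ) else 0)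
          = ((ndn d σ : ℂ)) * ((1/4) * (if nup d σ = d then ((b:ℝ):ℂ) else 0)) := by
        rw [← sum_ite_count_false σ ((1/4 : ℂ) * (if nup d σ = d then ((b:ℝ):ℂ) else 0))]
        apply Finset.sum_congr rfl
        intro i _
        rcases hi : σ i.succ with _ | _
        · have hnf : nup d (flip2 d σ i) = nup d σ + 1 := nup_flip2_of_false σ i hi
          have hf0 : flip2 d σ i 0 = false := by rw [flip2_apply_zero, hσ0]; rfl
          have hval : ψR (flip2 d σ i) = if nup d σ = d then b else 0 := by
            rw [hψR]
            simp only [hf0, Bool.false_eq_true, if_false]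
            congr 1
            simp only [eq_iff_iff]
            omega
          have hval2 : ((ψR (flip2 d σ i) : ℝ) : ℂ)
              = if nup d σ = d then ((b:ℝ):ℂ) else 0 := by
            rw [hval]; split <;> simp
          simp [hσ0, hi, hval2, mul_ite, mul_zero]
        · simp [hσ0, hi]
      rw [hsum]
      have hψσ : ψR σ = if nup d σ = d then a else 0 := by
        rw [hψR]; simp [hσ0]
      rw [hψσ]
      by_cases hn : nup d σ = d
      · have hdn : ndn d σ = d := by
          have := nup_add_ndn (d := d) σ; omega
        simp only [hn, if_true, if_pos rfl, hdn]
        push_cast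
        have : lam * ((1/2) * a) - (d:ℝ) * ((1/4) * b) = (-(1/4) * Real.sqrt D) * a := by
          rw [hb, ha]
          have hcc : -(1/4) * Real.sqrt D = -c := by rw [hc]; ring
          rw [hcc]; ring
        have h2 := congrArg (fun x : ℝ => (x : ℂ)) this
        push_cast at h2 ⊢
        exact_mod_cast h2
      · simp [hn]



variable {d : ℕ}

lemma sum_ite_count_true_real (σ : Cfg' (2*d+1)) (c : ℝ) :
    (∑ i : Fin (2*d), if σ i.succ = true then c else 0) = (nup d σ : ℝ) * c := by
  rw [nup, Finset.sum_ite, Finset.sum_const, Finset.sum_const_zero, add_zero, nsmul_eq_mul]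

lemma sum_ite_count_false_real (σ : Cfg' (2*d+1)) (c : ℝ) :
    (∑ i : Fin (2*d), if σ i.succ = false then c else 0) = (ndn d σ : ℝ) * c := by
  rw [ndn, Finset.sum_ite, Finset.sum_const, Finset.sum_const_zero, add_zero, nsmul_eq_mul]

def flipEquiv (d : ℕ) : (Cfg' (2*d+1) × Fin (2*d)) ≃ (Cfg' (2*d+1) × Fin (2*d)) where
  toFun p := (flip2 d p.1 p.2, p.2)
  invFun p := (flip2 d p.1 p.2, p.2)
  left_inv p := by cases p; simp [flip2_flip2]
  right_inv p := by cases p; simp [flip2_flip2]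

lemma pair_flip_sum {M : Type*} [AddCommMonoid M] (F : Cfg' (2*d+1) → Fin (2*d) → M) :
    ∑ p : Cfg' (2*d+1) × Fin (2*d),
        (if p.1 0 = false ∧ p.1 p.2.succ = true then F p.1 p.2 else 0)
    = ∑ p : Cfg' (2*d+1) × Fin (2*d),
        (if p.1 0 = true ∧ p.1 p.2.succ = false then F (flip2 d p.1 p.2) p.2 else 0) := by
  apply Fintype.sum_equiv (flipEquiv d)
  intro p
  show _ = (if flip2 d p.1 p.2 0 = true ∧ flip2 d p.1 p.2 p.2.succ = false
      then F (flip2 d (flip2 d p.1 p.2) p.2) p.2 else 0)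
  rw [flip2_flip2, flip2_apply_zero, flip2_apply_succ]
  cases h0 : p.1 0 <;> cases hi : p.1 p.2.succ <;> simp

lemma nested_pairs {M : Type*} [AddCommMonoid M] (b e : Bool)
    (F : Cfg' (2*d+1) → Fin (2*d) → M) :
    ∑ σ ∈ Finset.univ.filter (fun σ : Cfg' (2*d+1) => σ 0 = b),
        ∑ i : Fin (2*d), (if σ i.succ = e then F σ i else 0)
    = ∑ p : Cfg' (2*d+1) × Fin (2*d),
        (if p.1 0 = b ∧ p.1 p.2.succ = e then F p.1 p.2 else 0) := by
  rw [Finset.sum_filter, Fintype.sum_prod_type]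
  apply Finset.sum_congr rfl
  intro σ _
  by_cases h : σ 0 = b <;> simp [h]

lemma count_ineq (dd u v : ℕ) (h : u + v = 2*dd) :
    ((u:ℝ)+1)*(v:ℝ) ≤ (dd:ℝ)*((dd:ℝ)+1) := by
  have hz : 0 ≤ ((dd:ℤ) - u) * (((dd:ℤ) - u) - 1) := by
    rcases le_or_gt ((dd:ℤ) - u) 0 with h1 | h1
    · have h2 : ((dd:ℤ) - u) - 1 ≤ 0 := by omega
      nlinarith
    · exact mul_nonneg (by omega) (by omega)
  have hv : (v:ℤ) = 2*dd - u := by omega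
  have : ((u:ℤ)+1)*(v:ℤ) ≤ (dd:ℤ)*((dd:ℤ)+1) := by nlinarith [hz]
  exact_mod_cast this

lemma nat_mul_sqrt_div (a : ℝ) (ha : 0 ≤ a) (v : ℕ) :
    (v:ℝ) * Real.sqrt (a / (v:ℝ)) = Real.sqrt (a * v) := by
  rcases Nat.eq_zero_or_pos v with rfl | hv
  · simp
  · have hv' : (0:ℝ) < v := by exact_mod_cast hv
    rw [Real.sqrt_div ha, Real.sqrt_mul ha]
    calc (v:ℝ) * (Real.sqrt a / Real.sqrt v) = Real.sqrt a * ((v:ℝ) / Real.sqrt v) := by ring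
    _ = Real.sqrt a * Real.sqrt v := by rw [Real.div_sqrt]

lemma conj_mul_self (z : ℂ) : (starRingEnd ℂ) z * z = ((‖z‖^2 : ℝ) : ℂ) := by
  rw [mul_comm, Complex.mul_conj, Complex.normSq_eq_norm_sq]



set_option maxHeartbeats 2000000 in
lemma lower_bound (d : ℕ) (hd : 1 ≤ d) (lam : ℝ) (hlam : 0 ≤ lam) (μ : ℝ)
    (ψ : Cfg' (2*d+1) → ℂ) (hne : ψ ≠ 0)
    (hψ : (starOp d lam).mulVec ψ = (μ:ℂ) • ψ) :
    -(1/4) * Real.sqrt ((d:ℝ)*((d:ℝ)+1) + 4*lam^2) ≤ μ := by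
  classical
  set D : ℝ := (d:ℝ)*((d:ℝ)+1) + 4*lam^2 with hD
  have hD0 : (0:ℝ) ≤ D := by positivity
  -- eigen-equation pointwise
  have key : ∀ σ : Cfg' (2*d+1), (μ:ℂ) * ψ σ =
      (lam : ℂ) * ((if σ 0 then (1/2 : ℂ) else -(1/2)) * ψ σ)
      - ∑ i : Fin (2*d), (if ¬(σ i.succ = σ 0) then (1/4 : ℂ) * ψ (flip2 d σ i) else 0) := by
    intro σ
    have := congrFun hψ σ
    rw [starOp_mulVec_apply] at this
    simpa [smul_eq_mul] using this.symm
  set upF := Finset.univ.filter (fun σ : Cfg' (2*d+1) => σ 0 = true) with hupF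
  set dnF := Finset.univ.filter (fun σ : Cfg' (2*d+1) => σ 0 = false) with hdnF
  set P : ℝ := ∑ σ ∈ upF, ‖ψ σ‖^2 with hP
  set Q : ℝ := ∑ σ ∈ dnF, ‖ψ σ‖^2 with hQ
  have hP0 : 0 ≤ P := Finset.sum_nonneg (fun σ _ => by positivity)
  have hQ0 : 0 ≤ Q := Finset.sum_nonneg (fun σ _ => by positivity)
  have hPc : ((P:ℝ):ℂ) = ∑ σ ∈ upF, (starRingEnd ℂ) (ψ σ) * ψ σ := by
    rw [hP]
    push_cast
    refine Finset.sum_congr rfl (fun σ _ => ?_)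
    rw [conj_mul_self]; norm_cast
  have hQc : ((Q:ℝ):ℂ) = ∑ σ ∈ dnF, (starRingEnd ℂ) (ψ σ) * ψ σ := by
    rw [hQ]
    push_cast
    refine Finset.sum_congr rfl (fun σ _ => ?_)
    rw [conj_mul_self]; norm_cast
  set TC : ℂ := ∑ p : Cfg' (2*d+1) × Fin (2*d),
      (if p.1 0 = true ∧ p.1 p.2.succ = false
        then (starRingEnd ℂ) (ψ p.1) * ψ (flip2 d p.1 p.2) else 0) with hTC
  -- identity 1
  have E1 : (μ:ℂ) * ((P:ℝ):ℂ) = (lam:ℂ)/2 * ((P:ℝ):ℂ) - (1/4 : ℂ) * TC := by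
    have step1 : (μ:ℂ) * ((P:ℝ):ℂ) = ∑ σ ∈ upF, (starRingEnd ℂ) (ψ σ) * ((μ:ℂ) * ψ σ) := by
      rw [hPc, Finset.mul_sum]
      exact Finset.sum_congr rfl (fun σ _ => by ring)
    rw [step1]
    have step2 : ∀ σ ∈ upF, (starRingEnd ℂ) (ψ σ) * ((μ:ℂ) * ψ σ)
        = (lam:ℂ)/2 * ((starRingEnd ℂ) (ψ σ) * ψ σ)
          - ∑ i : Fin (2*d), (if σ i.succ = false
              then (1/4 : ℂ) * ((starRingEnd ℂ) (ψ σ) * ψ (flip2 d σ i)) else 0) := by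
      intro σ hσ
      have h0 : σ 0 = true := by simpa [hupF] using hσ
      rw [key σ, h0]
      simp only [Bool.not_eq_true, if_true]
      rw [mul_sub, Finset.mul_sum]
      congr 1
      · ring
      · refine Finset.sum_congr rfl (fun i _ => ?_)
        split <;> ring_nf <;> simp
    rw [Finset.sum_congr rfl step2, Finset.sum_sub_distrib, ← Finset.mul_sum, ← hPc]
    congr 1
    have conv : ∑ σ ∈ upF, ∑ i : Fin (2*d), (if σ i.succ = false
        then (1/4 : ℂ) * ((starRingEnd ℂ) (ψ σ) * ψ (flip2 d σ i)) else 0)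
        = (1/4 : ℂ) * TC := by
      rw [nested_pairs true false
        (fun σ i => (1/4 : ℂ) * ((starRingEnd ℂ) (ψ σ) * ψ (flip2 d σ i))), hTC,
        Finset.mul_sum]
      refine Finset.sum_congr rfl (fun p _ => ?_)
      split <;> simp
    rw [conv]
  -- identity 2
  have hTD : (∑ p : Cfg' (2*d+1) × Fin (2*d),
      (if p.1 0 = false ∧ p.1 p.2.succ = true
        then (starRingEnd ℂ) (ψ p.1) * ψ (flip2 d p.1 p.2) else 0))
      = (starRingEnd ℂ) TC := by
    rw [pair_flip_sum (fun σ i => (starRingEnd ℂ) (ψ σ) * ψ (flip2 d σ i)), hTC, map_sum]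
    refine Finset.sum_congr rfl (fun p _ => ?_)
    rw [flip2_flip2, apply_ite (starRingEnd ℂ), map_zero]
    split
    · rw [_root_.map_mul, Complex.conj_conj]; ring
    · rfl
  have E2 : (μ:ℂ) * ((Q:ℝ):ℂ) = -((lam:ℂ)/2) * ((Q:ℝ):ℂ) - (1/4 : ℂ) * (starRingEnd ℂ) TC := by
    have step1 : (μ:ℂ) * ((Q:ℝ):ℂ) = ∑ σ ∈ dnF, (starRingEnd ℂ) (ψ σ) * ((μ:ℂ) * ψ σ) := by
      rw [hQc, Finset.mul_sum]
      exact Finset.sum_congr rfl (fun σ _ => by ring)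
    rw [step1]
    have step2 : ∀ σ ∈ dnF, (starRingEnd ℂ) (ψ σ) * ((μ:ℂ) * ψ σ)
        = -((lam:ℂ)/2) * ((starRingEnd ℂ) (ψ σ) * ψ σ)
          - ∑ i : Fin (2*d), (if σ i.succ = true
              then (1/4 : ℂ) * ((starRingEnd ℂ) (ψ σ) * ψ (flip2 d σ i)) else 0) := by
      intro σ hσ
      have h0 : σ 0 = false := by simpa [hdnF] using hσ
      rw [key σ, h0]
      simp only [Bool.not_eq_false, Bool.false_eq_true, if_false]
      rw [mul_sub, Finset.mul_sum]
      congr 1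
      · ring
      · refine Finset.sum_congr rfl (fun i _ => ?_)
        split <;> ring_nf <;> simp
    rw [Finset.sum_congr rfl step2, Finset.sum_sub_distrib, ← Finset.mul_sum, ← hQc]
    congr 1
    have conv : ∑ σ ∈ dnF, ∑ i : Fin (2*d), (if σ i.succ = true
        then (1/4 : ℂ) * ((starRingEnd ℂ) (ψ σ) * ψ (flip2 d σ i)) else 0)
        = (1/4 : ℂ) * (starRingEnd ℂ) TC := by
      rw [nested_pairs false true
        (fun σ i => (1/4 : ℂ) * ((starRingEnd ℂ) (ψ σ) * ψ (flip2 d σ i))), ← hTD,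
        Finset.mul_sum]
      refine Finset.sum_congr rfl (fun p _ => ?_)
      split <;> simp
    rw [conv]
  -- realness of TC
  set t : ℝ := 4*(lam/2 - μ)*P with ht
  have hTCt : TC = ((t:ℝ):ℂ) := by
    rw [ht]
    push_cast
    linear_combination (4 : ℂ) * E1
  have E2real : (μ + lam/2) * Q = -(t/4) := by
    have h2 : ((μ + lam/2) * Q + t/4 : ℝ) = 0 := by
      have hc : (((μ + lam/2) * Q + t/4 : ℝ) : ℂ) = 0 := by
        push_cast
        rw [hTCt] at E2
        rw [Complex.conj_ofReal] at E2
        push_cast at E2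
        linear_combination E2
      exact_mod_cast hc
    linarith
  have E1real : (lam/2 - μ) * P = t/4 := by rw [ht]; ring
  clear E1 E2
  -- Cauchy-Schwarz machinery
  set K : ℝ := Real.sqrt ((d:ℝ)*((d:ℝ)+1)) with hK
  have hK0 : 0 ≤ K := Real.sqrt_nonneg _
  set r : Cfg' (2*d+1) → ℝ := fun σ => Real.sqrt (((nup d σ : ℝ)+1)/(ndn d σ : ℝ)) with hr
  set s' : Cfg' (2*d+1) → ℝ := fun τ => Real.sqrt (((ndn d τ : ℝ)+1)/(nup d τ : ℝ)) with hs'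
  have hr0 : ∀ σ, 0 ≤ r σ := fun σ => Real.sqrt_nonneg _
  have hs0 : ∀ τ, 0 ≤ s' τ := fun τ => Real.sqrt_nonneg _
  set f : Cfg' (2*d+1) × Fin (2*d) → ℝ := fun p =>
    if p.1 0 = true ∧ p.1 p.2.succ = false then Real.sqrt (r p.1) * ‖ψ p.1‖ else 0 with hf
  set g : Cfg' (2*d+1) × Fin (2*d) → ℝ := fun p =>
    if p.1 0 = true ∧ p.1 p.2.succ = false
      then Real.sqrt (s' (flip2 d p.1 p.2)) * ‖ψ (flip2 d p.1 p.2)‖ else 0 with hg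
  -- |t| is bounded by the sum of products
  have habs : |t| ≤ ∑ p : Cfg' (2*d+1) × Fin (2*d), f p * g p := by
    have h1 : |t| = ‖TC‖ := by rw [hTCt, Complex.norm_real, Real.norm_eq_abs]
    rw [h1, hTC]
    refine le_trans (norm_sum_le _ _) (le_of_eq ?_)
    refine Finset.sum_congr rfl (fun p _ => ?_)
    simp only [hf, hg]
    by_cases hc : p.1 0 = true ∧ p.1 p.2.succ = false
    · rw [if_pos hc, if_pos hc, if_pos hc, norm_mul, RCLike.norm_conj]
      -- show the weights multiply to 1
      have hdn1 : 1 ≤ ndn d p.1 := by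
        rw [ndn]
        refine Finset.card_pos.mpr ⟨p.2, ?_⟩
        simp [hc.2]
      have hnupf : nup d (flip2 d p.1 p.2) = nup d p.1 + 1 := nup_flip2_of_false _ _ hc.2
      have hndnf : ndn d (flip2 d p.1 p.2) + 1 = ndn d p.1 := by
        have h3 := nup_add_ndn (d := d) p.1
        have h4 := nup_add_ndn (d := d) (flip2 d p.1 p.2)
        omega
      have hprod : r p.1 * s' (flip2 d p.1 p.2) = 1 := by
        rw [hr, hs']
        simp only
        rw [← Real.sqrt_mul (by positivity)]
        rw [hnupf]
        have hnd : ((ndn d (flip2 d p.1 p.2) : ℝ) + 1) = (ndn d p.1 : ℝ) := by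
          exact_mod_cast congrArg (fun x : ℕ => (x:ℝ)) hndnf
        rw [hnd]
        have hne1 : ((nup d p.1 : ℝ) + 1) ≠ 0 := by positivity
        have hne2 : ((ndn d p.1 : ℝ)) ≠ 0 := by
          have : (0:ℝ) < (ndn d p.1 : ℝ) := by exact_mod_cast hdn1
          linarith
        have : ((nup d p.1 : ℝ)+1)/(ndn d p.1 : ℝ) * ((ndn d p.1 : ℝ)/((nup d p.1 : ℝ)+1)) = 1 := by
          field_simp
        have hcast : ((nup d p.1 : ℝ) + 1 + 1 - 1) = ((nup d p.1 : ℝ) + 1) := by ring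
        rw [show ((nup d p.1 + 1 : ℕ) : ℝ) = (nup d p.1 : ℝ) + 1 by push_cast; ring] at *
        rw [this, Real.sqrt_one]
      have hsq : Real.sqrt (r p.1) * Real.sqrt (s' (flip2 d p.1 p.2)) = 1 := by
        rw [← Real.sqrt_mul (hr0 _), hprod, Real.sqrt_one]
      calc ‖ψ p.1‖ * ‖ψ (flip2 d p.1 p.2)‖
          = (Real.sqrt (r p.1) * Real.sqrt (s' (flip2 d p.1 p.2)))
            * (‖ψ p.1‖ * ‖ψ (flip2 d p.1 p.2)‖) := by rw [hsq]; ring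
        _ = Real.sqrt (r p.1) * ‖ψ p.1‖
            * (Real.sqrt (s' (flip2 d p.1 p.2)) * ‖ψ (flip2 d p.1 p.2)‖) := by ring
    · simp [hc]
  -- bound on the f-part
  have hf2 : ∑ p : Cfg' (2*d+1) × Fin (2*d), f p^2 ≤ K * P := by
    have hfp : ∀ p : Cfg' (2*d+1) × Fin (2*d), f p^2
        = if p.1 0 = true ∧ p.1 p.2.succ = false then r p.1 * ‖ψ p.1‖^2 else 0 := by
      intro p
      simp only [hf]
      by_cases hc : p.1 0 = true ∧ p.1 p.2.succ = false
      · rw [if_pos hc, if_pos hc, mul_pow, Real.sq_sqrt (hr0 _)]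
      · simp [hc]
    rw [Finset.sum_congr rfl (fun p _ => hfp p)]
    rw [← nested_pairs true false (fun σ _ => r σ * ‖ψ σ‖^2)]
    rw [← hupF]
    have hinner : ∀ σ ∈ upF, (∑ i : Fin (2*d),
        if σ i.succ = false then r σ * ‖ψ σ‖^2 else 0) = (ndn d σ : ℝ) * (r σ * ‖ψ σ‖^2) :=
      fun σ _ => sum_ite_count_false_real σ _
    rw [Finset.sum_congr rfl hinner, hP, Finset.mul_sum]
    refine Finset.sum_le_sum (fun σ _ => ?_)
    have hb : (ndn d σ : ℝ) * r σ ≤ K := by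
      rw [hr]
      simp only
      rw [nat_mul_sqrt_div ((nup d σ : ℝ)+1) (by positivity) (ndn d σ), hK]
      exact Real.sqrt_le_sqrt (count_ineq d (nup d σ) (ndn d σ) (nup_add_ndn σ))
    calc (ndn d σ : ℝ) * (r σ * ‖ψ σ‖^2) = ((ndn d σ : ℝ) * r σ) * ‖ψ σ‖^2 := by ring
      _ ≤ K * ‖ψ σ‖^2 := mul_le_mul_of_nonneg_right hb (by positivity)
  -- bound on the g-part
  have hg2 : ∑ p : Cfg' (2*d+1) × Fin (2*d), g p^2 ≤ K * Q := by
    have hgp : ∀ p : Cfg' (2*d+1) × Fin (2*d), g p^2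
        = if p.1 0 = true ∧ p.1 p.2.succ = false
            then s' (flip2 d p.1 p.2) * ‖ψ (flip2 d p.1 p.2)‖^2 else 0 := by
      intro p
      simp only [hg]
      by_cases hc : p.1 0 = true ∧ p.1 p.2.succ = false
      · rw [if_pos hc, if_pos hc, mul_pow, Real.sq_sqrt (hs0 _)]
      · simp [hc]
    rw [Finset.sum_congr rfl (fun p _ => hgp p)]
    rw [← pair_flip_sum (fun τ _ => s' τ * ‖ψ τ‖^2)]
    rw [← nested_pairs false true (fun τ _ => s' τ * ‖ψ τ‖^2)]
    rw [← hdnF]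
    have hinner : ∀ τ ∈ dnF, (∑ i : Fin (2*d),
        if τ i.succ = true then s' τ * ‖ψ τ‖^2 else 0) = (nup d τ : ℝ) * (s' τ * ‖ψ τ‖^2) :=
      fun τ _ => sum_ite_count_true_real τ _
    rw [Finset.sum_congr rfl hinner, hQ, Finset.mul_sum]
    refine Finset.sum_le_sum (fun τ _ => ?_)
    have hb : (nup d τ : ℝ) * s' τ ≤ K := by
      rw [hs']
      simp only
      rw [nat_mul_sqrt_div ((ndn d τ : ℝ)+1) (by positivity) (nup d τ), hK]
      refine Real.sqrt_le_sqrt (count_ineq d (ndn d τ) (nup d τ) ?_)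
      have := nup_add_ndn (d := d) τ
      omega
    calc (nup d τ : ℝ) * (s' τ * ‖ψ τ‖^2) = ((nup d τ : ℝ) * s' τ) * ‖ψ τ‖^2 := by ring
      _ ≤ K * ‖ψ τ‖^2 := mul_le_mul_of_nonneg_right hb (by positivity)
  -- combine: t² ≤ d(d+1) P Q
  have hfg0 : (0:ℝ) ≤ ∑ p : Cfg' (2*d+1) × Fin (2*d), f p * g p :=
    le_trans (abs_nonneg t) habs
  have hg20 : (0:ℝ) ≤ ∑ p : Cfg' (2*d+1) × Fin (2*d), g p^2 :=
    Finset.sum_nonneg (fun p _ => sq_nonneg _)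
  have ht2 : t^2 ≤ ((d:ℝ)*((d:ℝ)+1)) * (P*Q) := by
    have h1 : t^2 ≤ (∑ p : Cfg' (2*d+1) × Fin (2*d), f p * g p)^2 := by
      rw [← sq_abs t]
      exact pow_le_pow_left₀ (abs_nonneg t) habs 2
    have h2 := Finset.sum_mul_sq_le_sq_mul_sq Finset.univ f g
    have h3 : (∑ p : Cfg' (2*d+1) × Fin (2*d), f p^2) * (∑ p : Cfg' (2*d+1) × Fin (2*d), g p^2)
        ≤ (K*P) * (K*Q) := mul_le_mul hf2 hg2 hg20 (mul_nonneg hK0 hP0)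
    have h4 : (K*P)*(K*Q) = ((d:ℝ)*((d:ℝ)+1))*(P*Q) := by
      have hKK : K^2 = (d:ℝ)*((d:ℝ)+1) := Real.sq_sqrt (by positivity)
      calc (K*P)*(K*Q) = K^2*(P*Q) := by ring
        _ = ((d:ℝ)*((d:ℝ)+1))*(P*Q) := by rw [hKK]
    linarith
  -- nondegeneracy
  have hPzero : P = 0 → ∀ σ ∈ upF, ψ σ = 0 := by
    intro h σ hσ
    have hsum0 : (∑ τ ∈ upF, ‖ψ τ‖^2) = 0 := by rw [← hP]; exact h
    have h2 : ∀ τ ∈ upF, ‖ψ τ‖^2 = 0 :=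
      (Finset.sum_eq_zero_iff_of_nonneg (fun τ _ => by positivity)).mp hsum0
    have h3 := h2 σ hσ
    exact norm_eq_zero.mp (pow_eq_zero_iff two_ne_zero |>.mp h3)
  have hQzero : Q = 0 → ∀ σ ∈ dnF, ψ σ = 0 := by
    intro h σ hσ
    have hsum0 : (∑ τ ∈ dnF, ‖ψ τ‖^2) = 0 := by rw [← hQ]; exact h
    have h2 : ∀ τ ∈ dnF, ‖ψ τ‖^2 = 0 :=
      (Finset.sum_eq_zero_iff_of_nonneg (fun τ _ => by positivity)).mp hsum0
    have h3 := h2 σ hσ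
    exact norm_eq_zero.mp (pow_eq_zero_iff two_ne_zero |>.mp h3)
  have hne' : ¬(P = 0 ∧ Q = 0) := by
    rintro ⟨h1, h2⟩
    apply hne
    funext σ
    rcases h0 : σ 0 with _ | _
    · exact hQzero h2 σ (by simp [hdnF, h0])
    · exact hPzero h1 σ (by simp [hupF, h0])
  clear habs hf2 hg2 hfg0 hg20 hTCt key hψ hPc hQc hPzero hQzero
  clear hf hg hr hs0 hr0 hs' hTC hTD
  clear_value f g r s' TC
  clear f g r s' TC
  have hDpos : 0 < D := by
    have h1 : (1:ℝ) ≤ (d:ℝ) := by exact_mod_cast hd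
    have h2 : 0 < (d:ℝ)*((d:ℝ)+1) := mul_pos (by linarith) (by linarith)
    have h3 : 0 ≤ 4*lam^2 := by positivity
    rw [hD]; linarith
  have hsqD : Real.sqrt D ^ 2 = D := Real.sq_sqrt hD0
  have hsqD0 : 0 < Real.sqrt D := Real.sqrt_pos.mpr hDpos
  by_cases hPz : P = 0
  · have htz : t = 0 := by rw [ht, hPz, mul_zero]
    have hQne : Q ≠ 0 := fun h => hne' ⟨hPz, h⟩
    have hQpos : 0 < Q := lt_of_le_of_ne hQ0 (Ne.symm hQne)
    have hmu : μ = -(lam/2) := by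
      have := E2real
      rw [htz] at this
      have h5 : (μ + lam/2) * Q = 0 := by linarith
      rcases mul_eq_zero.mp h5 with h6 | h6
      · linarith
      · exact absurd h6 hQne
    rw [hmu]
    have h4 : Real.sqrt (4*lam^2) ≤ Real.sqrt D := by
      apply Real.sqrt_le_sqrt
      rw [hD]
      nlinarith [hd, sq_nonneg lam]
    have h5 : Real.sqrt (4*lam^2) = 2*lam := by
      rw [show (4*lam^2 : ℝ) = (2*lam)^2 by ring, Real.sqrt_sq (by positivity)]
    rw [h5] at h4
    linarith
  · by_cases hQz : Q = 0
    · have htz : t = 0 := by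
        have := E2real
        rw [hQz, mul_zero] at this
        linarith
      have hPpos : 0 < P := lt_of_le_of_ne hP0 (Ne.symm hPz)
      have hmu : μ = lam/2 := by
        have := E1real
        rw [htz] at this
        have h5 : (lam/2 - μ) * P = 0 := by linarith
        rcases mul_eq_zero.mp h5 with h6 | h6
        · linarith
        · exact absurd h6 hPz
      rw [hmu]
      have := Real.sqrt_nonneg D
      linarith
    · have hPpos : 0 < P := lt_of_le_of_ne hP0 (Ne.symm hPz)
      have hQpos : 0 < Q := lt_of_le_of_ne hQ0 (Ne.symm hQz)
      have e1 : t = 4*(lam/2 - μ)*P := ht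
      have e2 : t = -(4*(μ + lam/2)*Q) := by linarith [E2real]
      have heq : (16*μ^2 - 4*lam^2)*(P*Q) = t^2 := by
        calc (16*μ^2 - 4*lam^2)*(P*Q)
            = (4*(lam/2 - μ)*P) * (-(4*(μ + lam/2)*Q)) := by ring
          _ = t * t := by rw [← e1, ← e2]
          _ = t^2 := (pow_two t).symm
      have h16 : (16*μ^2 - 4*lam^2)*(P*Q) ≤ ((d:ℝ)*((d:ℝ)+1))*(P*Q) := by
        rw [heq]; exact ht2
      have h17 : 16*μ^2 - 4*lam^2 ≤ (d:ℝ)*((d:ℝ)+1) :=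
        le_of_mul_le_mul_right h16 (mul_pos hPpos hQpos)
      have h18 : 16*μ^2 ≤ D := by rw [hD]; linarith
      nlinarith [sq_nonneg (4*μ + Real.sqrt D)]


end StarAux

/-- The lowest eigenvalue of
`−(1/2) S¹₀ Σ_{i=1}^{2d} S¹ᵢ − (1/2) S²₀ Σ_{i=1}^{2d} S²ᵢ + λ S³₀`
equals `−(1/4)[d(d+1)+4λ²]^{1/2}`. -/
theorem starOp_lowest_eigenvalue (d : ℕ) (hd : 1 ≤ d) (lam : ℝ) (hlam : 0 ≤ lam) :
    IsLeast {μ : ℝ | ∃ ψ : Cfg' (2 * d + 1) → ℂ, ψ ≠ 0 ∧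
        (starOp d lam).mulVec ψ = (μ : ℂ) • ψ}
      (-(1/4) * Real.sqrt ((d : ℝ) * ((d : ℝ) + 1) + 4 * lam ^ 2)) := by
  constructor
  · obtain ⟨ψ, h1, h2⟩ := StarAux.mem_spec d hd lam hlam
    exact ⟨ψ, h1, h2⟩
  · rintro μ ⟨ψ, h1, h2⟩
    exact StarAux.lower_bound d hd lam hlam μ ψ h1 h2

end
end

section
/- Let H be an n×n Hermitian complex matrix, β > 0, and A an arbitrary n×n complex matrix. Then Tr( [A†, [H, A]] · e^{−βH} ) is a real number and is ≥ 0. (In particular, thermal expectations of such double commutators, as the quantities C_p in the paper, are nonnegative.) -/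
open Matrix
noncomputable section

lemma trace_formula (n : ℕ) (B : Matrix (Fin n) (Fin n) ℂ) (lam w : Fin n → ℝ) :
    ((Bᴴ * (diagonal (fun i => (lam i : ℂ)) * B - B * diagonal (fun i => (lam i : ℂ))) -
      (diagonal (fun i => (lam i : ℂ)) * B - B * diagonal (fun i => (lam i : ℂ))) * Bᴴ) *
      diagonal (fun i => (w i : ℂ))).trace
    = ((∑ i, ∑ j, (lam i - lam j) * (w j - w i) * Complex.normSq (B i j) : ℝ) : ℂ) := by
  have e1 : diagonal (fun i => (lam i : ℂ)) * B - B * diagonal (fun i => (lam i : ℂ))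
      = Matrix.of (fun i j => ((lam i : ℂ) - lam j) * B i j) := by
    ext i j
    simp [Matrix.diagonal_mul, Matrix.mul_diagonal, Matrix.sub_apply]
    ring
  rw [e1]
  have h1 : ((Bᴴ * Matrix.of (fun i j => ((lam i : ℂ) - lam j) * B i j) -
      Matrix.of (fun i j => ((lam i : ℂ) - lam j) * B i j) * Bᴴ) *
      diagonal (fun i => (w i : ℂ))).trace
      = ∑ i, ∑ j, (star (B j i) * B j i * ((lam j : ℂ) - lam i) * w i
          + B i j * star (B i j) * ((lam j : ℂ) - lam i) * w i) := by
    simp only [Matrix.trace, Matrix.diag, Matrix.mul_diagonal]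
    simp only [Matrix.sub_apply, Matrix.mul_apply, Matrix.conjTranspose_apply, Matrix.of_apply,
      Finset.sum_mul, sub_mul]
    refine Finset.sum_congr rfl fun i _ => ?_
    rw [← Finset.sum_sub_distrib]
    refine Finset.sum_congr rfl fun j _ => ?_
    ring
  rw [h1]
  simp only [Finset.sum_add_distrib]
  rw [Finset.sum_comm (f := fun i j => star (B j i) * B j i * ((lam j : ℂ) - lam i) * (w i : ℂ))]
  simp only [← Finset.sum_add_distrib]
  push_cast
  refine Finset.sum_congr rfl fun i _ => Finset.sum_congr rfl fun j _ => ?_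
  have h2 : ∀ z : ℂ, (starRingEnd ℂ) z * z = ((Complex.normSq z : ℝ) : ℂ) := fun z => by
    rw [mul_comm, Complex.mul_conj]
  simp only [Complex.star_def]
  rw [mul_comm (B i j) ((starRingEnd ℂ) (B i j))]
  simp only [h2]
  ring


/-- The thermal trace of a double commutator
`Tr([A†,[H,A]] e^{−βH})` is a nonnegative real number, for `H` Hermitian. -/
theorem double_commutator_trace_nonneg (n : ℕ) (H A : Matrix (Fin n) (Fin n) ℂ)
    (hH : H.IsHermitian) (β : ℝ) (hβ : 0 < β) :
    ((Aᴴ * (H * A - A * H) - (H * A - A * H) * Aᴴ) *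
        NormedSpace.exp ((-(β : ℂ)) • H)).trace.im = 0 ∧
      0 ≤ ((Aᴴ * (H * A - A * H) - (H * A - A * H) * Aᴴ) *
        NormedSpace.exp ((-(β : ℂ)) • H)).trace.re := by
  set U : Matrix (Fin n) (Fin n) ℂ := (hH.eigenvectorUnitary : Matrix (Fin n) (Fin n) ℂ) with hUdef
  set lam : Fin n → ℝ := hH.eigenvalues with hlam
  set D : Matrix (Fin n) (Fin n) ℂ := diagonal (fun i => (lam i : ℂ)) with hD
  set W : Matrix (Fin n) (Fin n) ℂ := diagonal (fun i => ((Real.exp (-β * lam i) : ℝ) : ℂ)) with hW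
  have hU : star U * U = 1 := mem_unitaryGroup_iff'.mp hH.eigenvectorUnitary.2
  have hU' : U * star U = 1 := mem_unitaryGroup_iff.mp hH.eigenvectorUnitary.2
  have hUnit : IsUnit U := ⟨⟨U, star U, hU', hU⟩, rfl⟩
  have hspec : H = U * D * star U := by
    have hs := hH.spectral_theorem
    rw [Unitary.conjStarAlgAut_apply] at hs
    exact hs
  have hexp : NormedSpace.exp ((-(β : ℂ)) • H) = U * W * star U := by
    have hinv : U⁻¹ = star U := Matrix.inv_eq_right_inv hU'
    have h1 : (-(β : ℂ)) • H = U * ((-(β : ℂ)) • D) * U⁻¹ := by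
      rw [hinv, hspec, Matrix.mul_smul, Matrix.smul_mul]
    rw [h1, Matrix.exp_conj _ _ hUnit, hinv]
    congr 2
    have h2 : (-(β : ℂ)) • D = diagonal (fun i => ((-β * lam i : ℝ) : ℂ)) := by
      rw [hD]
      ext i j
      by_cases h : i = j <;>
        simp [h, Matrix.diagonal_apply, Matrix.smul_apply]
    rw [h2, Matrix.exp_diagonal, hW]
    have h3 : (NormedSpace.exp fun i => ((-β * lam i : ℝ) : ℂ))
        = fun i => ((Real.exp (-β * lam i) : ℝ) : ℂ) := by
      funext i
      rw [Pi.coe_exp, ← Complex.exp_eq_exp_ℂ, Complex.ofReal_exp]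
    rw [h3]
  have cmul : ∀ P Q : Matrix (Fin n) (Fin n) ℂ,
      (U * P * star U) * (U * Q * star U) = U * (P * Q) * star U := by
    intro P Q
    calc (U * P * star U) * (U * Q * star U)
        = U * P * (star U * U) * Q * star U := by
          simp only [Matrix.mul_assoc]
      _ = U * (P * Q) * star U := by rw [hU]; simp only [Matrix.mul_assoc, Matrix.mul_one, Matrix.one_mul]
  have csub : ∀ P Q : Matrix (Fin n) (Fin n) ℂ,
      (U * P * star U) - (U * Q * star U) = U * (P - Q) * star U := by
    intro P Q
    rw [Matrix.mul_sub, Matrix.sub_mul]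
  set B : Matrix (Fin n) (Fin n) ℂ := star U * A * U with hB
  have hA : A = U * B * star U := by
    rw [hB]
    calc A = (U * star U) * A * (U * star U) := by rw [hU']; simp
      _ = U * (star U * A * U) * star U := by simp only [Matrix.mul_assoc]
  have hAH : Aᴴ = U * Bᴴ * star U := by
    rw [hA]
    simp only [Matrix.conjTranspose_mul, Matrix.star_eq_conjTranspose]
    simp only [Matrix.conjTranspose_conjTranspose, Matrix.mul_assoc]
  have key : (Aᴴ * (H * A - A * H) - (H * A - A * H) * Aᴴ) *
      NormedSpace.exp ((-(β : ℂ)) • H)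
      = U * ((Bᴴ * (D * B - B * D) - (D * B - B * D) * Bᴴ) * W) * star U := by
    rw [hexp, hAH, hspec, hA]
    simp only [cmul, csub]
  rw [key]
  have htr : (U * ((Bᴴ * (D * B - B * D) - (D * B - B * D) * Bᴴ) * W) * star U).trace
      = ((Bᴴ * (D * B - B * D) - (D * B - B * D) * Bᴴ) * W).trace := by
    rw [Matrix.trace_mul_cycle, ← Matrix.mul_assoc, hU, Matrix.one_mul]
  rw [htr, hD, hW, trace_formula]
  constructor
  · exact Complex.ofReal_im _
  · simp only [Complex.ofReal_re]
    refine Finset.sum_nonneg fun i _ => Finset.sum_nonneg fun j _ => ?_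
    refine mul_nonneg ?_ (Complex.normSq_nonneg _)
    rcases le_total (lam i) (lam j) with h | h
    · have he : Real.exp (-β * lam j) ≤ Real.exp (-β * lam i) :=
        Real.exp_le_exp.mpr (by nlinarith)
      nlinarith
    · have he : Real.exp (-β * lam i) ≤ Real.exp (-β * lam j) :=
        Real.exp_le_exp.mpr (by nlinarith)
      nlinarith
end
end

section
/- Let M be an n×n positive semidefinite Hermitian complex matrix and m a natural number such that for every row index p the set { q : M_{pq} ≠ 0 } has at most m elements. Then every eigenvalue of M is at most m · max_p M_{pp}. (This is the 'almost diagonal matrix' bound used to show the one-particle density matrix has exactly one large eigenvalue.) -/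
open Matrix
open scoped ComplexOrder

noncomputable section

/-- Cauchy–Schwarz for entries of a PSD matrix. -/
lemma psd_entry_sq_le (n : ℕ) (M : Matrix (Fin n) (Fin n) ℂ) (hM : M.PosSemidef)
    (p q : Fin n) : ‖M p q‖ ^ 2 ≤ (M p p).re * (M q q).re := by
  have hherm : ∀ i j, (starRingEnd ℂ) (M j i) = M i j := fun i j =>
    congrFun (congrFun hM.1 i) j
  letI c : PreInnerProductSpace.Core ℂ (Fin n → ℂ) :=
    { inner := fun x y => star x ⬝ᵥ M *ᵥ y
      conj_inner_symm := fun x y => by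
        simp only [dotProduct, mulVec, dotProduct, map_sum, Finset.mul_sum]
        rw [Finset.sum_comm]
        refine Finset.sum_congr rfl fun i _ => Finset.sum_congr rfl fun j _ => ?_
        simp only [_root_.map_mul, Complex.star_def, Complex.conj_conj, Pi.star_apply]
        rw [hherm i j]; ring
      re_inner_nonneg := fun x => hM.re_dotProduct_nonneg x
      add_left := fun x y z => by
        simp [star_add, add_dotProduct]
      smul_left := fun x y r => by
        simp [star_smul, smul_dotProduct, smul_eq_mul] }
  have key := InnerProductSpace.Core.inner_mul_inner_self_le (𝕜 := ℂ) (F := Fin n → ℂ)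
    (Pi.single p 1) (Pi.single q 1)
  have hpq : ∀ i j : Fin n,
      @inner ℂ (Fin n → ℂ) c.toInner (Pi.single i 1) (Pi.single j 1) = M i j := by
    intro i j
    show star (Pi.single i 1) ⬝ᵥ M *ᵥ Pi.single j 1 = M i j
    simp [mulVec_single, dotProduct, Pi.single_apply]
  rw [hpq p q, hpq q p, hpq p p, hpq q q] at key
  have hnorm : ‖M q p‖ = ‖M p q‖ := by
    rw [← hherm q p]; exact RCLike.norm_conj _
  calc ‖M p q‖ ^ 2 = ‖M p q‖ * ‖M q p‖ := by rw [hnorm, sq]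
    _ ≤ (M p p).re * (M q q).re := key

private lemma row_sum_bound' {n m : ℕ} (P : Fin n → Prop) [DecidablePred P]
    (hcard : (Finset.univ.filter P).card ≤ m) (c : ℝ) (hc : 0 ≤ c) :
    ∑ q, (if P q then c else 0) ≤ m * c := by
  rw [← Finset.sum_filter, Finset.sum_const, nsmul_eq_mul]
  exact mul_le_mul_of_nonneg_right (by exact_mod_cast hcard) hc

/-- **Almost diagonal matrix bound**: if `M` is positive semidefinite and every row
of `M` has at most `m` nonzero entries, then every eigenvalue of `M` is at most
`m · max_p M_{pp}`. -/
theorem sparse_psd_eigenvalue_bound (n : ℕ) (M : Matrix (Fin n) (Fin n) ℂ)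
    (hM : M.PosSemidef) (m : ℕ) (hrow : ∀ p, {q | M p q ≠ 0}.ncard ≤ m)
    (μ : ℝ) (ψ : Fin n → ℂ) (hψ : ψ ≠ 0) (hev : M.mulVec ψ = (μ : ℂ) • ψ) :
    μ ≤ (m : ℝ) * ⨆ p, (M p p).re := by
  classical
  have hherm : ∀ i j, (starRingEnd ℂ) (M j i) = M i j := fun i j =>
    congrFun (congrFun hM.1 i) j
  have hne : Nonempty (Fin n) := by
    rcases Nat.eq_zero_or_pos n with h | h
    · exfalso; apply hψ; subst h; ext i; exact i.elim0
    · exact ⟨⟨0, h⟩⟩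
  set D : ℝ := ⨆ p, (M p p).re with hDdef
  have hDle : ∀ p, (M p p).re ≤ D := by
    intro p
    rw [hDdef]
    exact le_ciSup (Set.Finite.bddAbove (Set.finite_range fun p => (M p p).re)) p
  have hdiag : ∀ p, 0 ≤ (M p p).re := by
    intro p
    have h := hM.re_dotProduct_nonneg (Pi.single p 1)
    have h2 : star (Pi.single p (1:ℂ)) ⬝ᵥ M *ᵥ Pi.single p 1 = M p p := by
      simp [mulVec_single, dotProduct, Pi.single_apply]
    rw [h2] at h
    exact h
  have hD0 : 0 ≤ D := le_trans (hdiag (Classical.arbitrary _)) (hDle _)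
  have habs : ∀ p q, ‖M p q‖ ≤ D := by
    intro p q
    have h2 : ‖M p q‖ ^ 2 ≤ D ^ 2 := by
      calc ‖M p q‖ ^ 2 ≤ (M p p).re * (M q q).re := psd_entry_sq_le n M hM p q
        _ ≤ D * D := mul_le_mul (hDle p) (hDle q) (hdiag q) hD0
        _ = D ^ 2 := (sq D).symm
    nlinarith [norm_nonneg (M p q)]
  set a : Fin n → ℝ := fun p => ‖ψ p‖ with ha
  set S : ℝ := ∑ p, a p ^ 2 with hSdef
  have hSpos : 0 < S := by
    have hex : ∃ p, ψ p ≠ 0 := by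
      by_contra h; push_neg at h; exact hψ (funext h)
    obtain ⟨p0, hp0⟩ := hex
    refine Finset.sum_pos' (fun i _ => sq_nonneg _) ⟨p0, Finset.mem_univ _, ?_⟩
    have : 0 < a p0 := norm_pos_iff.mpr hp0
    positivity
  have hcard : ∀ p, (Finset.univ.filter fun q => M p q ≠ 0).card ≤ m := by
    intro p
    have h := hrow p
    have h2 : {q | M p q ≠ 0}.ncard = (Finset.univ.filter fun q => M p q ≠ 0).card := by
      rw [Set.ncard_eq_toFinset_card']
      congr 1
      ext q; simp
    rwa [h2] at h
  -- the quadratic form equals μ * S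
  have hrw : (star ψ ⬝ᵥ M *ᵥ ψ) = ((μ * S : ℝ) : ℂ) := by
    rw [hev]
    calc star ψ ⬝ᵥ ((μ : ℂ) • ψ) = ∑ p, star (ψ p) * ((μ : ℂ) * ψ p) := by
          simp [dotProduct]
      _ = ∑ p, (μ : ℂ) * ((a p : ℝ) ^ 2 : ℂ) := by
          refine Finset.sum_congr rfl fun p _ => ?_
          have : star (ψ p) * ψ p = ((a p : ℝ) ^ 2 : ℂ) := by
            rw [Complex.star_def, mul_comm, Complex.mul_conj]
            norm_cast
            rw [ha]
            exact (Complex.sq_norm _).symm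
          calc star (ψ p) * ((μ : ℂ) * ψ p) = (μ : ℂ) * (star (ψ p) * ψ p) := by ring
            _ = (μ : ℂ) * ((a p : ℝ) ^ 2 : ℂ) := by rw [this]
      _ = ((μ * S : ℝ) : ℂ) := by
          rw [← Finset.mul_sum, hSdef]
          push_cast
          ring
  -- expand the quadratic form as a double sum of real parts
  have hexp : (star ψ ⬝ᵥ M *ᵥ ψ).re = ∑ p, ∑ q, (star (ψ p) * (M p q * ψ q)).re := by
    simp only [dotProduct, mulVec, Pi.star_apply, Finset.mul_sum]
    rw [Complex.re_sum]
    exact Finset.sum_congr rfl fun p _ => Complex.re_sum _ _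
  -- bound each term
  have hterm : ∀ p q, (star (ψ p) * (M p q * ψ q)).re ≤
      (if M p q ≠ 0 then D / 2 * a p ^ 2 else 0) + (if M p q ≠ 0 then D / 2 * a q ^ 2 else 0) := by
    intro p q
    by_cases h : M p q = 0
    · simp [h]
    · simp only [h, ne_eq, not_false_eq_true, if_true]
      have h1 : (star (ψ p) * (M p q * ψ q)).re ≤ ‖star (ψ p) * (M p q * ψ q)‖ :=
        Complex.re_le_norm _
      have h2 : ‖star (ψ p) * (M p q * ψ q)‖ = a p * (‖M p q‖ * a q) := by
        rw [norm_mul, norm_mul, ha]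
        simp
      have h3 : ‖M p q‖ ≤ D := habs p q
      have hap : 0 ≤ a p := norm_nonneg _
      have haq : 0 ≤ a q := norm_nonneg _
      nlinarith [sq_nonneg (a p - a q), norm_nonneg (M p q)]
  -- sum the bounds
  have hsum1 : ∀ p, ∑ q, (if M p q ≠ 0 then D / 2 * a p ^ 2 else 0) ≤ m * (D / 2 * a p ^ 2) := by
    intro p
    exact row_sum_bound' _ (hcard p) _ (by positivity)
  have hzero_symm : ∀ p q, (M p q ≠ 0) ↔ (M q p ≠ 0) := by
    intro p q
    rw [← hherm p q]
    simp
  have hsum2 : ∑ p, ∑ q, (if M p q ≠ 0 then D / 2 * a q ^ 2 else 0) ≤ m * (D / 2) * S := by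
    rw [Finset.sum_comm]
    calc ∑ q, ∑ p, (if M p q ≠ 0 then D / 2 * a q ^ 2 else 0)
        = ∑ q, ∑ p, (if M q p ≠ 0 then D / 2 * a q ^ 2 else 0) := by
          refine Finset.sum_congr rfl fun q _ => Finset.sum_congr rfl fun p _ => ?_
          rw [if_congr (hzero_symm p q) rfl rfl]
      _ ≤ ∑ q, (m : ℝ) * (D / 2 * a q ^ 2) := by
          refine Finset.sum_le_sum fun q _ => ?_
          exact row_sum_bound' _ (hcard q) _ (by positivity)
      _ = m * (D / 2) * S := by
          rw [hSdef, Finset.mul_sum]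
          congr 1
          ext q
          ring
  have hmain : μ * S ≤ m * D * S := by
    have e1 : μ * S = (star ψ ⬝ᵥ M *ᵥ ψ).re := by rw [hrw, Complex.ofReal_re]
    calc μ * S = ∑ p, ∑ q, (star (ψ p) * (M p q * ψ q)).re := by rw [e1, hexp]
      _ ≤ ∑ p, ∑ q, ((if M p q ≠ 0 then D / 2 * a p ^ 2 else 0)
            + (if M p q ≠ 0 then D / 2 * a q ^ 2 else 0)) := by
          exact Finset.sum_le_sum fun p _ => Finset.sum_le_sum fun q _ => hterm p q
      _ = (∑ p, ∑ q, (if M p q ≠ 0 then D / 2 * a p ^ 2 else 0))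
            + ∑ p, ∑ q, (if M p q ≠ 0 then D / 2 * a q ^ 2 else 0) := by
          rw [← Finset.sum_add_distrib]
          exact Finset.sum_congr rfl fun p _ => Finset.sum_add_distrib
      _ ≤ (∑ p, (m : ℝ) * (D / 2 * a p ^ 2)) + m * (D / 2) * S :=
          add_le_add (Finset.sum_le_sum fun p _ => hsum1 p) hsum2
      _ = m * D * S := by
          have h4 : ∑ p, (m : ℝ) * (D / 2 * a p ^ 2) = (m : ℝ) * (D / 2) * S := by
            rw [hSdef, Finset.mul_sum]
            exact Finset.sum_congr rfl fun p _ => by ring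
          rw [h4]; ring
  exact le_of_mul_le_mul_right hmain hSpos


end
end

section
/- Let A and C be n×n Hermitian complex matrices and ε ∈ ℝ. Then, in the Loewner order, e^{iεC} A e^{−iεC} ≤ A + iε[C,A] + (ε²/2)·‖[C,[C,A]]‖·I, where ‖·‖ is the operator norm and I the identity matrix. (Note that iε[C,A] is Hermitian, so both sides are Hermitian.) -/
open Matrix
open scoped ComplexOrder

noncomputable section

/-- The ℓ²→ℓ² operator norm of a complex matrix. -/
def opNorm (n : ℕ) (B : Matrix (Fin n) (Fin n) ℂ) : ℝ :=
  ‖Matrix.toEuclideanCLM (𝕜 := ℂ) B‖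

open NormedSpace in
/-- Second-order Taylor lemma: if `g'' ≤ M` everywhere then
`g ε ≤ g 0 + ε g'(0) + ε²/2 · M`. -/
lemma taylor2_aux' {g g' g'' : ℝ → ℝ} {M : ℝ}
    (h1 : ∀ t, HasDerivAt g (g' t) t) (h2 : ∀ t, HasDerivAt g' (g'' t) t)
    (hM : ∀ t, g'' t ≤ M) (ε : ℝ) :
    g ε ≤ g 0 + ε * g' 0 + ε ^ 2 / 2 * M := by
  set h : ℝ → ℝ := fun t => g 0 + t * g' 0 + t ^ 2 / 2 * M - g t with hh
  set h' : ℝ → ℝ := fun t => g' 0 + t * M - g' t with hh'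
  have hd : ∀ t, HasDerivAt h (h' t) t := by
    intro t
    have : HasDerivAt (fun t : ℝ => g 0 + t * g' 0 + t ^ 2 / 2 * M) (g' 0 + t * M) t := by
      have ha : HasDerivAt (fun t : ℝ => t * g' 0) (g' 0) t := by
        simpa using (hasDerivAt_id t).mul_const (g' 0)
      have hb : HasDerivAt (fun t : ℝ => t ^ 2 / 2 * M) (t * M) t := by
        have : HasDerivAt (fun t : ℝ => t ^ 2 / 2) t t := by
          have := (hasDerivAt_pow 2 t).div_const 2
          simpa using this
        simpa using this.mul_const M
      have := ((hasDerivAt_const t (g 0)).add ha).add hb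
      rw [zero_add] at this
      exact this
    exact this.sub (h1 t)
  have hd' : ∀ t, HasDerivAt h' (M - g'' t) t := by
    intro t
    have : HasDerivAt (fun t : ℝ => g' 0 + t * M) M t := by
      have := (hasDerivAt_const t (g' 0)).add ((hasDerivAt_id t).mul_const M)
      simp only [zero_add, one_mul] at this
      exact this
    exact this.sub (h2 t)
  have hmono : Monotone h' := by
    apply monotone_of_deriv_nonneg
    · exact fun t => (hd' t).differentiableAt
    · intro t
      rw [(hd' t).deriv]
      linarith [hM t]
  have h'0 : h' 0 = 0 := by simp [hh']
  have key : 0 ≤ h ε := by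
    rcases le_or_gt 0 ε with hε | hε
    · have hm : MonotoneOn h (Set.Ici 0) := by
        apply monotoneOn_of_deriv_nonneg (convex_Ici 0)
        · exact fun t _ => (hd t).differentiableAt.continuousAt.continuousWithinAt
        · exact fun t _ => (hd t).differentiableAt.differentiableWithinAt
        · intro t ht
          rw [interior_Ici] at ht
          rw [(hd t).deriv]
          have := hmono (le_of_lt ht)
          rw [h'0] at this; linarith
      have := hm Set.self_mem_Ici (Set.mem_Ici.mpr hε) hε
      have h0 : h 0 = 0 := by simp [hh]
      linarith
    · have hm : AntitoneOn h (Set.Iic 0) := by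
        apply antitoneOn_of_deriv_nonpos (convex_Iic 0)
        · exact fun t _ => (hd t).differentiableAt.continuousAt.continuousWithinAt
        · exact fun t _ => (hd t).differentiableAt.differentiableWithinAt
        · intro t ht
          rw [interior_Iic] at ht
          rw [(hd t).deriv]
          have := hmono (le_of_lt ht)
          rw [h'0] at this; linarith
      have := hm (Set.mem_Iic.mpr (le_of_lt hε)) Set.self_mem_Iic (le_of_lt hε)
      have h0 : h 0 = 0 := by simp [hh]
      linarith
  simp only [hh] at key
  linarith

/-- The quadratic form `M ↦ star v ⬝ᵥ M *ᵥ v` as a `ℂ`-linear map. -/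
def quadLM' (n : ℕ) (v : Fin n → ℂ) : Matrix (Fin n) (Fin n) ℂ →ₗ[ℂ] ℂ where
  toFun M := star v ⬝ᵥ (M *ᵥ v)
  map_add' M N := by simp [Matrix.add_mulVec, dotProduct_add]
  map_smul' c M := by simp [Matrix.smul_mulVec, dotProduct_smul]

open NormedSpace in
lemma deriv_conj' (n : ℕ) (B X : Matrix (Fin n) (Fin n) ℂ) (v : Fin n → ℂ) (t : ℝ) :
    HasDerivAt
      (fun s : ℝ => ((star v ⬝ᵥ ((exp (s • B) * X * exp (s • (-B))) *ᵥ v)) : ℂ).re)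
      ((star v ⬝ᵥ ((exp (t • B) * (B * X - X * B) * exp (t • (-B))) *ᵥ v) : ℂ).re) t := by
  letI : SeminormedRing (Matrix (Fin n) (Fin n) ℂ) := Matrix.linftyOpSemiNormedRing
  letI : NormedRing (Matrix (Fin n) (Fin n) ℂ) := Matrix.linftyOpNormedRing
  letI : NormedAlgebra ℝ (Matrix (Fin n) (Fin n) ℂ) := Matrix.linftyOpNormedAlgebra
  letI : NormedAlgebra ℂ (Matrix (Fin n) (Fin n) ℂ) := Matrix.linftyOpNormedAlgebra
  have hU : ∀ s : ℝ, HasDerivAt (fun s : ℝ => exp (s • B)) (B * exp (s • B)) s := by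
    intro s
    have := hasDerivAt_exp_smul_const' (𝕂 := ℝ) B s
    exact this
  have hV : ∀ s : ℝ, HasDerivAt (fun s : ℝ => exp (s • (-B))) (-B * exp (s • (-B))) s := by
    intro s
    have := hasDerivAt_exp_smul_const' (𝕂 := ℝ) (-B) s
    exact this
  have hBU : B * exp (t • B) = exp (t • B) * B := by
    have h1 : Commute B (t • B) := (Commute.refl B).smul_right t
    have h2 := h1.exp_right
    exact h2
  have hBV : B * exp (t • (-B)) = exp (t • (-B)) * B := by
    have h1 : Commute B (t • (-B)) := ((Commute.refl B).neg_right).smul_right t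
    have h2 := h1.exp_right
    exact h2
  have hF : HasDerivAt (fun s : ℝ => exp (s • B) * X * exp (s • (-B)))
      (exp (t • B) * (B * X - X * B) * exp (t • (-B))) t := by
    have h := ((hU t).mul_const X).mul (hV t)
    refine h.congr_deriv (Eq.symm ?_)
    rw [mul_sub, sub_mul]
    simp only [neg_mul, mul_neg, ← mul_assoc, ← hBU, sub_eq_add_neg]
  have : FiniteDimensional ℂ (Matrix (Fin n) (Fin n) ℂ) := by infer_instance
  set L : Matrix (Fin n) (Fin n) ℂ →L[ℂ] ℂ := LinearMap.toContinuousLinearMap (quadLM' n v)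
  set ℓ : Matrix (Fin n) (Fin n) ℂ →L[ℝ] ℝ := Complex.reCLM.comp (L.restrictScalars ℝ)
  have h := ℓ.hasFDerivAt.comp_hasDerivAt t hF
  exact h

lemma quad_bound' (n : ℕ) (M : Matrix (Fin n) (Fin n) ℂ) (v : Fin n → ℂ) :
    |((star v ⬝ᵥ (M *ᵥ v) : ℂ)).re| ≤ opNorm n M * ((star v ⬝ᵥ v : ℂ)).re := by
  classical
  set T := Matrix.toEuclideanCLM (𝕜 := ℂ) M with hT
  set x : EuclideanSpace ℂ (Fin n) := (WithLp.equiv 2 _).symm v with hx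
  have h1 : (star v ⬝ᵥ (M *ᵥ v) : ℂ) = inner ℂ x (T x) := by
    exact dotProduct_comm (star v) (M *ᵥ v)
  have h2 : ((star v ⬝ᵥ v : ℂ)).re = ‖x‖ ^ 2 := by
    have h3 : (inner ℂ x x : ℂ) = star v ⬝ᵥ v := dotProduct_comm v (star v)
    rw [← h3, inner_self_eq_norm_sq_to_K]
    norm_cast
  rw [h1, h2]
  calc |(inner ℂ x (T x) : ℂ).re| ≤ ‖(inner ℂ x (T x) : ℂ)‖ := Complex.abs_re_le_norm _
    _ ≤ ‖x‖ * ‖T x‖ := norm_inner_le_norm _ _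
    _ ≤ ‖x‖ * (‖T‖ * ‖x‖) := by
        apply mul_le_mul_of_nonneg_left (T.le_opNorm x) (norm_nonneg x)
    _ = ‖T‖ * ‖x‖ ^ 2 := by ring

lemma conj_quad_bound' (n : ℕ) (U D : Matrix (Fin n) (Fin n) ℂ) (hU : Uᴴ * U = 1)
    (v : Fin n → ℂ) :
    |((star v ⬝ᵥ ((U * D * Uᴴ) *ᵥ v) : ℂ)).re| ≤ opNorm n D * ((star v ⬝ᵥ v : ℂ)).re := by
  set w := Uᴴ *ᵥ v with hw
  have hsw : star w = star v ᵥ* U := by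
    rw [hw, Matrix.star_mulVec, Matrix.conjTranspose_conjTranspose]
  have h1 : star v ⬝ᵥ ((U * D * Uᴴ) *ᵥ v) = star w ⬝ᵥ (D *ᵥ w) := by
    rw [← Matrix.mulVec_mulVec, ← Matrix.mulVec_mulVec, Matrix.dotProduct_mulVec, ← hsw, hw]
  have h2 : star w ⬝ᵥ w = star v ⬝ᵥ v := by
    rw [hsw, hw, ← Matrix.dotProduct_mulVec, Matrix.mulVec_mulVec,
      mul_eq_one_comm.mp hU, Matrix.one_mulVec]
  rw [h1, ← h2]
  exact quad_bound' n D w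

lemma herm_quad_real' (n : ℕ) (R : Matrix (Fin n) (Fin n) ℂ) (hR : Rᴴ = R) (v : Fin n → ℂ) :
    ((star v ⬝ᵥ (R *ᵥ v) : ℂ)).im = 0 := by
  have h : star (star v ⬝ᵥ (R *ᵥ v) : ℂ) = star v ⬝ᵥ (R *ᵥ v) := by
    conv_lhs => rw [Matrix.star_dotProduct, star_star, Matrix.star_mulVec,
      ← Matrix.dotProduct_mulVec, hR]
  exact Complex.conj_eq_iff_im.mp h

open NormedSpace

/-- **Second-order Taylor bound for unitary conjugation**, in the Loewner order:
for Hermitian `A`, `C` and real `ε`,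
`e^{iεC} A e^{−iεC} ≤ A + iε[C,A] + (ε²/2)·‖[C,[C,A]]‖·I`. -/
theorem conjugation_taylor_bound (n : ℕ) (A C : Matrix (Fin n) (Fin n) ℂ)
    (hA : A.IsHermitian) (hC : C.IsHermitian) (ε : ℝ) :
    (A + (Complex.I * (ε : ℂ)) • (C * A - A * C)
        + (((ε ^ 2 / 2) * opNorm n (C * (C * A - A * C) - (C * A - A * C) * C) : ℝ) : ℂ)
            • (1 : Matrix (Fin n) (Fin n) ℂ)
        - NormedSpace.exp ((Complex.I * (ε : ℂ)) • C) * A *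
            NormedSpace.exp ((-(Complex.I * (ε : ℂ))) • C)).PosSemidef := by
  classical
  set B : Matrix (Fin n) (Fin n) ℂ := Complex.I • C with hB
  -- smul conversions
  have e1 : ∀ s : ℝ, (s • B : Matrix (Fin n) (Fin n) ℂ) = (Complex.I * (s : ℂ)) • C := by
    intro s; ext i j; simp [hB, Complex.real_smul]; ring
  have e2 : ∀ s : ℝ, (s • (-B) : Matrix (Fin n) (Fin n) ℂ) = (-(Complex.I * (s : ℂ))) • C := by
    intro s; ext i j; simp [hB, Complex.real_smul]; ring
  rw [show ((Complex.I * (ε : ℂ)) • C : Matrix (Fin n) (Fin n) ℂ) = ε • B from (e1 ε).symm,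
    show ((-(Complex.I * (ε : ℂ))) • C : Matrix (Fin n) (Fin n) ℂ) = ε • (-B) from (e2 ε).symm]
  set W0 : Matrix (Fin n) (Fin n) ℂ := C * A - A * C with hW0
  set D : Matrix (Fin n) (Fin n) ℂ := C * W0 - W0 * C with hD
  set M₀ : ℝ := opNorm n D with hM₀
  -- basic conjugation facts
  have hBH : Bᴴ = -B := by
    rw [hB, Matrix.conjTranspose_smul, hC.eq, Complex.star_def, Complex.conj_I, neg_smul]
  have hadjB : ∀ s : ℝ, (exp (s • B))ᴴ = exp (s • (-B)) := by
    intro s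
    rw [← Matrix.exp_conjTranspose, Matrix.conjTranspose_smul, star_trivial, hBH]
  have hadjB' : ∀ s : ℝ, (exp (s • (-B)))ᴴ = exp (s • B) := by
    intro s
    rw [← Matrix.exp_conjTranspose, Matrix.conjTranspose_smul, star_trivial,
      Matrix.conjTranspose_neg, hBH, neg_neg]
  have hunit : ∀ s : ℝ, (exp (s • B))ᴴ * exp (s • B) = 1 := by
    intro s
    letI : SeminormedRing (Matrix (Fin n) (Fin n) ℂ) := Matrix.linftyOpSemiNormedRing
    letI : NormedRing (Matrix (Fin n) (Fin n) ℂ) := Matrix.linftyOpNormedRing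
    letI : NormedAlgebra ℂ (Matrix (Fin n) (Fin n) ℂ) := Matrix.linftyOpNormedAlgebra
    rw [hadjB s]
    have hcomm : Commute (s • (-B)) (s • B) :=
      (((Commute.refl B).neg_left).smul_left s).smul_right s
    rw [← Matrix.exp_add_of_commute _ _ hcomm]
    have : s • (-B) + s • B = (0 : Matrix (Fin n) (Fin n) ℂ) := by
      rw [smul_neg, neg_add_cancel]
    rw [this, exp_zero]
  have h0exp : ∀ X : Matrix (Fin n) (Fin n) ℂ, exp ((0 : ℝ) • X) = 1 := by
    intro X
    letI : SeminormedRing (Matrix (Fin n) (Fin n) ℂ) := Matrix.linftyOpSemiNormedRing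
    letI : NormedRing (Matrix (Fin n) (Fin n) ℂ) := Matrix.linftyOpNormedRing
    letI : NormedAlgebra ℂ (Matrix (Fin n) (Fin n) ℂ) := Matrix.linftyOpNormedAlgebra
    rw [zero_smul, exp_zero]
  -- Hermitian-ness of the matrix in question
  have hW0H : W0ᴴ = -W0 := by
    rw [hW0, Matrix.conjTranspose_sub, Matrix.conjTranspose_mul, Matrix.conjTranspose_mul,
      hA.eq, hC.eq, neg_sub]
  have hFH : (exp (ε • B) * A * exp (ε • (-B)))ᴴ = exp (ε • B) * A * exp (ε • (-B)) := by
    rw [Matrix.conjTranspose_mul, Matrix.conjTranspose_mul, hA.eq, hadjB ε, hadjB' ε, mul_assoc]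
  have hstarz : star (Complex.I * (ε : ℂ)) = -(Complex.I * (ε : ℂ)) := by
    simp [Complex.star_def, _root_.map_mul, Complex.conj_I, Complex.conj_ofReal]
  have hherm : (A + (Complex.I * (ε : ℂ)) • W0
      + (((ε ^ 2 / 2) * M₀ : ℝ) : ℂ) • (1 : Matrix (Fin n) (Fin n) ℂ)
      - exp (ε • B) * A * exp (ε • (-B)))ᴴ
      = A + (Complex.I * (ε : ℂ)) • W0
      + (((ε ^ 2 / 2) * M₀ : ℝ) : ℂ) • (1 : Matrix (Fin n) (Fin n) ℂ)
      - exp (ε • B) * A * exp (ε • (-B)) := by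
    rw [Matrix.conjTranspose_sub, Matrix.conjTranspose_add, Matrix.conjTranspose_add,
      Matrix.conjTranspose_smul, Matrix.conjTranspose_smul, Matrix.conjTranspose_one,
      hA.eq, hW0H, hFH, hstarz]
    congr 2
    · rw [smul_neg, neg_smul, neg_neg]
    · rw [Complex.star_def, Complex.conj_ofReal]
  refine Matrix.PosSemidef.of_dotProduct_mulVec_nonneg hherm (fun v => ?_)
  -- the quadratic form
  set svv : ℝ := ((star v ⬝ᵥ v : ℂ)).re with hsvv
  -- second-derivative bound
  have hcomm2 : B * (B * A - A * B) - (B * A - A * B) * B = -D := by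
    rw [hD, hW0, hB]
    simp only [smul_mul_assoc, mul_smul_comm, smul_sub, sub_smul, smul_smul,
      Complex.I_mul_I, neg_smul, one_smul, mul_sub, sub_mul, neg_sub]
    abel
  have hbound : ∀ t : ℝ,
      ((star v ⬝ᵥ ((exp (t • B) * (B * (B * A - A * B) - (B * A - A * B) * B)
          * exp (t • (-B))) *ᵥ v)) : ℂ).re ≤ M₀ * svv := by
    intro t
    rw [hcomm2, ← hadjB t]
    have hneg : exp (t • B) * -D * (exp (t • B))ᴴ
        = -(exp (t • B) * D * (exp (t • B))ᴴ) := by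
      simp [mul_neg, neg_mul]
    rw [hneg, Matrix.neg_mulVec, dotProduct_neg, Complex.neg_re]
    calc -((star v ⬝ᵥ ((exp (t • B) * D * (exp (t • B))ᴴ) *ᵥ v) : ℂ)).re
        ≤ |((star v ⬝ᵥ ((exp (t • B) * D * (exp (t • B))ᴴ) *ᵥ v) : ℂ)).re| := neg_le_abs _
      _ ≤ M₀ * svv := conj_quad_bound' n (exp (t • B)) D (hunit t) v
  -- Taylor bound
  have htay := taylor2_aux'
    (g := fun s : ℝ => ((star v ⬝ᵥ ((exp (s • B) * A * exp (s • (-B))) *ᵥ v)) : ℂ).re)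
    (g' := fun s : ℝ => ((star v ⬝ᵥ ((exp (s • B) * (B * A - A * B)
        * exp (s • (-B))) *ᵥ v)) : ℂ).re)
    (g'' := fun s : ℝ => ((star v ⬝ᵥ ((exp (s • B) * (B * (B * A - A * B) - (B * A - A * B) * B)
        * exp (s • (-B))) *ᵥ v)) : ℂ).re)
    (M := M₀ * svv)
    (deriv_conj' n B A v) (deriv_conj' n B (B * A - A * B) v) hbound ε
  simp only [h0exp, one_mul, mul_one] at htay
  -- identify the first derivative term
  have hqW : (star v ⬝ᵥ ((B * A - A * B) *ᵥ v) : ℂ) = Complex.I * (star v ⬝ᵥ (W0 *ᵥ v)) := by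
    rw [show B * A - A * B = Complex.I • W0 by
      rw [hB, hW0]; simp [smul_mul_assoc, mul_smul_comm, smul_sub]]
    rw [Matrix.smul_mulVec, dotProduct_smul, smul_eq_mul]
  rw [hqW] at htay
  -- expand the quadratic form of the big matrix
  have hz : (star v ⬝ᵥ ((A + (Complex.I * (ε : ℂ)) • W0
      + (((ε ^ 2 / 2) * M₀ : ℝ) : ℂ) • (1 : Matrix (Fin n) (Fin n) ℂ)
      - exp (ε • B) * A * exp (ε • (-B))) *ᵥ v) : ℂ)
      = star v ⬝ᵥ (A *ᵥ v) + (Complex.I * (ε : ℂ)) * (star v ⬝ᵥ (W0 *ᵥ v))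
        + (((ε ^ 2 / 2) * M₀ : ℝ) : ℂ) * (star v ⬝ᵥ v)
        - star v ⬝ᵥ ((exp (ε • B) * A * exp (ε • (-B))) *ᵥ v) := by
    simp [Matrix.add_mulVec, Matrix.sub_mulVec, Matrix.smul_mulVec,
      dotProduct_add, dotProduct_sub, dotProduct_smul,
      Matrix.one_mulVec, smul_eq_mul]
  rw [Complex.le_def]
  constructor
  · rw [Complex.zero_re, hz]
    simp only [Complex.add_re, Complex.sub_re]
    have hmid : ((Complex.I * (ε : ℂ)) * (star v ⬝ᵥ (W0 *ᵥ v))).re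
        = ε * (Complex.I * (star v ⬝ᵥ (W0 *ᵥ v))).re := by
      rw [show (Complex.I * (ε : ℂ)) * (star v ⬝ᵥ (W0 *ᵥ v))
          = ((ε : ℂ)) * (Complex.I * (star v ⬝ᵥ (W0 *ᵥ v))) by ring,
        Complex.re_ofReal_mul]
    have hcterm : ((((ε ^ 2 / 2) * M₀ : ℝ) : ℂ) * (star v ⬝ᵥ v)).re
        = (ε ^ 2 / 2 * M₀) * svv := by
      rw [Complex.re_ofReal_mul, hsvv]
    rw [hmid, hcterm]
    have harr : ε ^ 2 / 2 * (M₀ * svv) = ε ^ 2 / 2 * M₀ * svv := by ring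
    linarith [htay]
  · rw [Complex.zero_im]
    exact (herm_quad_real' n _ hherm v).symm

end
end

section
/- Let M and A be n×n complex matrices. Then |Tr( M† A M A† )| ≤ [ Tr( (M M†)^{1/2} A (M M†)^{1/2} A† ) ]^{1/2} · [ Tr( (M† M)^{1/2} A (M† M)^{1/2} A† ) ]^{1/2}, where (·)^{1/2} denotes the positive semidefinite square root; both traces on the right-hand side are nonnegative real numbers. -/
open Matrix
open scoped ComplexOrder

noncomputable section

/-- The positive semidefinite square root `(MM†)^{1/2}`. -/
def sqrtMMH (n : ℕ) (M : Matrix (Fin n) (Fin n) ℂ) : Matrix (Fin n) (Fin n) ℂ :=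
  (Matrix.posSemidef_self_mul_conjTranspose M).1.eigenvectorUnitary.1 *
    diagonal ((↑) ∘ Real.sqrt ∘ (Matrix.posSemidef_self_mul_conjTranspose M).1.eigenvalues) *
    (star (Matrix.posSemidef_self_mul_conjTranspose M).1.eigenvectorUnitary : Matrix (Fin n) (Fin n) ℂ)

/-- The positive semidefinite square root `(M†M)^{1/2}`. -/
def sqrtMHM (n : ℕ) (M : Matrix (Fin n) (Fin n) ℂ) : Matrix (Fin n) (Fin n) ℂ :=
  (Matrix.posSemidef_conjTranspose_mul_self M).1.eigenvectorUnitary.1 *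
    diagonal ((↑) ∘ Real.sqrt ∘ (Matrix.posSemidef_conjTranspose_mul_self M).1.eigenvalues) *
    (star (Matrix.posSemidef_conjTranspose_mul_self M).1.eigenvectorUnitary : Matrix (Fin n) (Fin n) ℂ)

open scoped MatrixOrder in
lemma psd_eq_sqrtAux {n : ℕ} {A B : Matrix (Fin n) (Fin n) ℂ} (hA : A.PosSemidef)
    (hB : B.PosSemidef) (h : A ^ 2 = B) :
    A = hB.1.eigenvectorUnitary.1 * diagonal ((↑) ∘ Real.sqrt ∘ hB.1.eigenvalues) *
      (star hB.1.eigenvectorUnitary : Matrix (Fin n) (Fin n) ℂ) := by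
  have h1 : CFC.sqrt B = A := (CFC.sqrt_eq_iff B A hB.nonneg hA.nonneg).mpr (by rw [← h, sq])
  rw [← h1, CFC.sqrt_eq_cfc, cfc_nnreal_eq_real _ B, hB.1.cfc_eq, IsHermitian.cfc,
    Unitary.conjStarAlgAut_apply]
  congr 3
  funext i
  simp [Real.coe_sqrt, Real.coe_toNNReal', hB.eigenvalues_nonneg i]

/-- Trace of `X * Xᴴ` is the (real, nonnegative) sum of squared absolute values. -/
lemma trace_mul_conjTranspose_self_eq {n : ℕ} (X : Matrix (Fin n) (Fin n) ℂ) :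
    (X * Xᴴ).trace = ((∑ p : Fin n × Fin n, ‖X p.1 p.2‖ ^ 2 : ℝ) : ℂ) := by
  have h : ∀ i j : Fin n, X i j * star (X i j) = ((‖X i j‖ ^ 2 : ℝ) : ℂ) := by
    intro i j
    rw [← Complex.normSq_eq_norm_sq, Complex.star_def, Complex.mul_conj]
  rw [Fintype.sum_prod_type]
  simp only [Matrix.trace, Matrix.diag, Matrix.mul_apply, Matrix.conjTranspose_apply, h]
  push_cast
  rfl

lemma trace_mul_conjTranspose_eq {n : ℕ} (X Y : Matrix (Fin n) (Fin n) ℂ) :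
    (X * Yᴴ).trace = ∑ p : Fin n × Fin n, X p.1 p.2 * (starRingEnd ℂ) (Y p.1 p.2) := by
  rw [Fintype.sum_prod_type]
  simp only [Matrix.trace, Matrix.diag, Matrix.mul_apply, Matrix.conjTranspose_apply]
  rfl

/-- **Trace Cauchy–Schwarz inequality** used for reflection positivity:
`|Tr(M†AMA†)| ≤ [Tr((MM†)^{1/2}A(MM†)^{1/2}A†)]^{1/2} [Tr((M†M)^{1/2}A(M†M)^{1/2}A†)]^{1/2}`,
both traces on the right being nonnegative reals. -/
theorem trace_cauchy_schwarz (n : ℕ) (M A : Matrix (Fin n) (Fin n) ℂ) :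
    (sqrtMMH n M * A * sqrtMMH n M * Aᴴ).trace.im = 0 ∧
    0 ≤ (sqrtMMH n M * A * sqrtMMH n M * Aᴴ).trace.re ∧
    (sqrtMHM n M * A * sqrtMHM n M * Aᴴ).trace.im = 0 ∧
    0 ≤ (sqrtMHM n M * A * sqrtMHM n M * Aᴴ).trace.re ∧
    ‖(Mᴴ * A * M * Aᴴ).trace‖ ≤
      Real.sqrt ((sqrtMMH n M * A * sqrtMMH n M * Aᴴ).trace.re) *
        Real.sqrt ((sqrtMHM n M * A * sqrtMHM n M * Aᴴ).trace.re) := by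
  classical
  have hP2 : (M * Mᴴ).PosSemidef := Matrix.posSemidef_self_mul_conjTranspose M
  have hH : (M * Mᴴ).IsHermitian := hP2.1
  set U : Matrix (Fin n) (Fin n) ℂ := (hH.eigenvectorUnitary : Matrix (Fin n) (Fin n) ℂ)
    with hUdef
  set lam : Fin n → ℝ := hH.eigenvalues with hlamdef
  have hnn : ∀ i, 0 ≤ lam i := fun i => hP2.eigenvalues_nonneg i
  have hUU : Uᴴ * U = 1 := by
    have := Matrix.mem_unitaryGroup_iff'.mp hH.eigenvectorUnitary.2
    simpa [Matrix.star_eq_conjTranspose] using this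
  have hUU' : U * Uᴴ = 1 := by
    have := Matrix.mem_unitaryGroup_iff.mp hH.eigenvectorUnitary.2
    simpa [Matrix.star_eq_conjTranspose] using this
  have hspec : M * Mᴴ = U * diagonal (fun i => (lam i : ℂ)) * Uᴴ := by
    have := hH.spectral_theorem
    rw [Unitary.conjStarAlgAut_apply] at this
    exact this
  have cancel : ∀ X : Matrix (Fin n) (Fin n) ℂ, Uᴴ * (U * X) = X := by
    intro X; rw [← Matrix.mul_assoc, hUU, Matrix.one_mul]
  have key : ∀ a b : Fin n → ℂ,
      (U * diagonal a * Uᴴ) * (U * diagonal b * Uᴴ)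
        = U * diagonal (fun i => a i * b i) * Uᴴ := by
    intro a b
    simp only [Matrix.mul_assoc]
    rw [cancel, ← Matrix.mul_assoc (diagonal a), Matrix.diagonal_mul_diagonal]
  have hconj : ∀ a : Fin n → ℂ,
      (U * diagonal a * Uᴴ)ᴴ = U * diagonal (fun i => star (a i)) * Uᴴ := by
    intro a
    simp only [Matrix.conjTranspose_mul, Matrix.diagonal_conjTranspose,
      Matrix.conjTranspose_conjTranspose, Matrix.mul_assoc]
    rfl
  -- quarter-power and pseudo-inverse-quarter-power diagonal entries
  set f4 : Fin n → ℂ := fun i => ((lam i ^ ((1 : ℝ)/4) : ℝ) : ℂ) with hf4def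
  set g : Fin n → ℂ :=
    fun i => if lam i = 0 then 0 else ((lam i ^ (-((1 : ℝ)/4)) : ℝ) : ℂ) with hgdef
  set R : Matrix (Fin n) (Fin n) ℂ := U * diagonal f4 * Uᴴ with hRdef
  set G : Matrix (Fin n) (Fin n) ℂ := U * diagonal g * Uᴴ with hGdef
  set K : Matrix (Fin n) (Fin n) ℂ := G * M with hKdef
  have hRH : Rᴴ = R := by
    rw [hRdef, hconj]
    have h : ∀ i, star (f4 i) = f4 i := by
      intro i; simp [hf4def, Complex.conj_ofReal]
    simp only [h]
  have hGH : Gᴴ = G := by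
    rw [hGdef, hconj]
    have h : ∀ i, star (g i) = g i := by
      intro i; by_cases h : lam i = 0 <;> simp [hgdef, h, Complex.conj_ofReal]
    simp only [h]
  have hf44 : ∀ i, f4 i * f4 i = ((lam i ^ ((1 : ℝ)/2) : ℝ) : ℂ) := by
    intro i
    by_cases h : lam i = 0
    · simp [hf4def, h, Real.zero_rpow (by norm_num : ((1:ℝ)/4) ≠ 0),
        Real.zero_rpow (by norm_num : ((1:ℝ)/2) ≠ 0)]
    · have hpos : 0 < lam i := lt_of_le_of_ne (hnn i) (Ne.symm h)
      simp only [hf4def]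
      rw [← Complex.ofReal_mul, ← Real.rpow_add hpos,
        show (1:ℝ)/4 + 1/4 = 1/2 by norm_num]
  have hRR : R * R = U * diagonal (fun i => ((lam i ^ ((1 : ℝ)/2) : ℝ) : ℂ)) * Uᴴ := by
    rw [hRdef, key]
    simp only [hf44]
  have hRRsqrt : R * R = sqrtMMH n M := by
    rw [hRR]
    refine psd_eq_sqrtAux ?_ (Matrix.posSemidef_self_mul_conjTranspose M) ?_
    · exact (Matrix.posSemidef_diagonal_iff.mpr fun i => by
        simpa using Complex.zero_le_real.mpr
          (Real.rpow_nonneg (hnn i) _)).mul_mul_conjTranspose_same U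
    · have h : ∀ i, ((lam i ^ ((1 : ℝ)/2) : ℝ) : ℂ) * ((lam i ^ ((1 : ℝ)/2) : ℝ) : ℂ)
          = (lam i : ℂ) := by
        intro i
        rw [← Complex.ofReal_mul, ← Real.rpow_add' (hnn i) (by norm_num),
          show (1:ℝ)/2 + 1/2 = 1 by norm_num, Real.rpow_one]
      rw [pow_two, key, hspec]
      simp only [h]
  -- R * K = M
  have hfg : ∀ i, f4 i * g i = (if lam i = 0 then 0 else 1 : ℂ) := by
    intro i
    by_cases h : lam i = 0
    · simp [hgdef, h]
    · have hpos : 0 < lam i := lt_of_le_of_ne (hnn i) (Ne.symm h)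
      simp only [hf4def, hgdef, if_neg h]
      rw [← Complex.ofReal_mul, ← Real.rpow_add hpos,
        show (1:ℝ)/4 + -((1:ℝ)/4) = 0 by norm_num, Real.rpow_zero]
      exact Complex.ofReal_one
  have hRG : R * G = U * diagonal (fun i => (if lam i = 0 then 0 else 1 : ℂ)) * Uᴴ := by
    rw [hRdef, hGdef, key]
    simp only [hfg]
  have hN : (1 - U * diagonal (fun i => (if lam i = 0 then 0 else 1 : ℂ)) * Uᴴ) * M = 0 := by
    set N : Matrix (Fin n) (Fin n) ℂ :=
      1 - U * diagonal (fun i => (if lam i = 0 then 0 else 1 : ℂ)) * Uᴴ with hNdef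
    have hNd : N = U * diagonal (fun i => (1 - if lam i = 0 then 0 else 1 : ℂ)) * Uᴴ := by
      rw [hNdef]
      have hd : (diagonal (fun i => (1 - if lam i = 0 then 0 else 1 : ℂ)))
          = 1 - diagonal (fun i => (if lam i = 0 then 0 else 1 : ℂ)) := by
        rw [← Matrix.diagonal_one, ← Matrix.diagonal_sub]
      rw [hd]
      simp [Matrix.mul_sub, Matrix.sub_mul, hUU']
    have hNH : Nᴴ = N := by
      rw [hNd, hconj]
      have h : ∀ i, star (1 - if lam i = 0 then 0 else 1 : ℂ)
          = (1 - if lam i = 0 then 0 else 1 : ℂ) := by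
        intro i; by_cases h : lam i = 0 <;> simp [h]
      simp only [h]
    refine Matrix.self_mul_conjTranspose_eq_zero.mp ?_
    have hexp : (N * M) * (N * M)ᴴ = N * (M * Mᴴ) * Nᴴ := by
      simp only [Matrix.conjTranspose_mul, Matrix.mul_assoc]
    have hz : ∀ i, (((1 - if lam i = 0 then 0 else 1 : ℂ) * (lam i : ℂ)) *
        (1 - if lam i = 0 then 0 else 1 : ℂ)) = (0 : ℂ) := by
      intro i
      by_cases h : lam i = 0 <;> simp [h]
    rw [hexp, hNH, hNd, hspec, key, key]
    simp only [hz]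
    simp
  have hRK : R * K = M := by
    have hPM : (U * diagonal (fun i => (if lam i = 0 then 0 else 1 : ℂ)) * Uᴴ) * M = M := by
      have h0 := hN
      rw [Matrix.sub_mul, Matrix.one_mul, sub_eq_zero] at h0
      exact h0.symm
    rw [hKdef, ← Matrix.mul_assoc, hRG, hPM]
  -- K * Kᴴ = R * R
  have hKKH : K * Kᴴ = R * R := by
    rw [hKdef, Matrix.conjTranspose_mul, hGH]
    have hexp : G * M * (Mᴴ * G) = G * (M * Mᴴ) * G := by
      simp only [Matrix.mul_assoc]
    have hglg : ∀ i, ((g i * (lam i : ℂ)) * g i) = ((lam i ^ ((1 : ℝ)/2) : ℝ) : ℂ) := by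
      intro i
      by_cases h : lam i = 0
      · simp [hgdef, h, Real.zero_rpow (by norm_num : ((1:ℝ)/2) ≠ 0)]
      · have hpos : 0 < lam i := lt_of_le_of_ne (hnn i) (Ne.symm h)
        have hr : lam i ^ (-((1:ℝ)/4)) * lam i * lam i ^ (-((1:ℝ)/4))
            = lam i ^ ((1:ℝ)/2) := by
          rw [show (1:ℝ)/2 = -((1:ℝ)/4) + 1 + -((1:ℝ)/4) by norm_num,
            Real.rpow_add hpos, Real.rpow_add hpos, Real.rpow_one]
        simp only [hgdef, if_neg h]
        rw [← Complex.ofReal_mul, ← Complex.ofReal_mul, hr]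
    rw [hexp, hspec, hRR, hGdef, key, key]
    simp only [hglg]
  -- Kᴴ * K is the psd square root of Mᴴ M
  have hKKsqrt : Kᴴ * K = sqrtMHM n M := by
    refine psd_eq_sqrtAux (Matrix.posSemidef_conjTranspose_mul_self K)
      (Matrix.posSemidef_conjTranspose_mul_self M) ?_
    have h1 : (Kᴴ * K) ^ 2 = Kᴴ * (K * Kᴴ) * K := by
      rw [pow_two]; simp only [Matrix.mul_assoc]
    have h2 : Kᴴ * (R * R) * K = Mᴴ * M := by
      conv_rhs => rw [← hRK, Matrix.conjTranspose_mul, hRH]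
      simp only [Matrix.mul_assoc]
    rw [h1, hKKH, h2]
  -- the two vectors for Cauchy–Schwarz
  set S : Matrix (Fin n) (Fin n) ℂ := R * A * R with hSdef
  set T : Matrix (Fin n) (Fin n) ℂ := K * A * Kᴴ with hTdef
  have e1 : (sqrtMMH n M * A * sqrtMMH n M * Aᴴ).trace = (S * Sᴴ).trace := by
    have h1 : S * Sᴴ = R * (A * (R * (R * (Aᴴ * R)))) := by
      rw [hSdef]; simp only [Matrix.conjTranspose_mul, hRH, Matrix.mul_assoc]
    have h2 : sqrtMMH n M * A * sqrtMMH n M * Aᴴ = R * (R * (A * (R * (R * Aᴴ)))) := by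
      rw [← hRRsqrt]; simp only [Matrix.mul_assoc]
    rw [h2, Matrix.trace_mul_comm, h1]
    simp only [Matrix.mul_assoc]
  have e2 : (sqrtMHM n M * A * sqrtMHM n M * Aᴴ).trace = (T * Tᴴ).trace := by
    have h1 : T * Tᴴ = K * (A * (Kᴴ * (K * (Aᴴ * Kᴴ)))) := by
      rw [hTdef]
      simp only [Matrix.conjTranspose_mul, Matrix.conjTranspose_conjTranspose, Matrix.mul_assoc]
    have h2 : sqrtMHM n M * A * sqrtMHM n M * Aᴴ = Kᴴ * (K * (A * (Kᴴ * (K * Aᴴ)))) := by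
      rw [← hKKsqrt]; simp only [Matrix.mul_assoc]
    rw [h2, Matrix.trace_mul_comm, h1]
    simp only [Matrix.mul_assoc]
  have e3 : (Mᴴ * A * M * Aᴴ).trace = (S * Tᴴ).trace := by
    have h1 : S * Tᴴ = R * (A * (R * (K * (Aᴴ * Kᴴ)))) := by
      rw [hSdef, hTdef]
      simp only [Matrix.conjTranspose_mul, Matrix.conjTranspose_conjTranspose, hRH,
        Matrix.mul_assoc]
    have h2 : Mᴴ * A * M * Aᴴ = Kᴴ * (R * (A * (R * (K * Aᴴ)))) := by
      rw [← hRK]; simp only [Matrix.conjTranspose_mul, hRH, Matrix.mul_assoc]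
    rw [h2, Matrix.trace_mul_comm, h1]
    simp only [Matrix.mul_assoc]
  have tS := trace_mul_conjTranspose_self_eq S
  have tT := trace_mul_conjTranspose_self_eq T
  refine ⟨?_, ?_, ?_, ?_, ?_⟩
  · rw [e1, tS, Complex.ofReal_im]
  · rw [e1, tS, Complex.ofReal_re]
    positivity
  · rw [e2, tT, Complex.ofReal_im]
  · rw [e2, tT, Complex.ofReal_re]
    positivity
  · rw [e1, e2, e3, tS, tT, Complex.ofReal_re, Complex.ofReal_re,
      trace_mul_conjTranspose_eq]
    calc ‖∑ p : Fin n × Fin n, S p.1 p.2 * (starRingEnd ℂ) (T p.1 p.2)‖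
        ≤ ∑ p : Fin n × Fin n, ‖S p.1 p.2 * (starRingEnd ℂ) (T p.1 p.2)‖ :=
          norm_sum_le _ _
      _ = ∑ p : Fin n × Fin n, ‖S p.1 p.2‖ * ‖T p.1 p.2‖ := by
          simp [norm_mul]
      _ ≤ Real.sqrt (∑ p : Fin n × Fin n, ‖S p.1 p.2‖ ^ 2) *
          Real.sqrt (∑ p : Fin n × Fin n, ‖T p.1 p.2‖ ^ 2) :=
          Real.sum_mul_le_sqrt_mul_sqrt _ _ _

end
end
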